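/- arXiv:1706.08976 — 6 statements merged into one kernel-verified Lean document; each statement's English description precedes it below -/
import Mathlib

section
/- Let S be an F-algebra and suppose that for every natural number n and every F-algebra homomorphism φ : Mₙ(F) → Mₙ(S) there exists an invertible matrix c ∈ Mₙ(S) such that φ(x) = c x c⁻¹ for every x ∈ Mₙ(F). Then S is a Skolem–Noether algebra. -/
open scoped TensorProduct

universe u v

/-- `S` is a Skolem–Noether `F`-algebra: for every central simple `F`-algebra `R`
(finite-dimensional, simple, with center `F·1`) and every `F`-algebra homomorphism
`φ : R → R ⊗[F] S` there is an invertible `c ∈ R ⊗[F] S` with `φ x = c (x ⊗ 1) c⁻¹`. -/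
def IsSkolemNoether (F : Type u) (S : Type v) [Field F] [Ring S] [Algebra F S] : Prop :=
  ∀ (R : Type u) [Ring R] [Algebra F R], FiniteDimensional F R → IsSimpleRing R →
    Algebra.IsCentral F R → ∀ φ : R →ₐ[F] R ⊗[F] S,
      ∃ c : (R ⊗[F] S)ˣ, ∀ x : R,
        φ x = Units.val c * (x ⊗ₜ[F] (1 : S)) * Units.val c⁻¹

universe w

section Aux

variable (F : Type u) [Field F]

/-- Right multiplication as an algebra hom from the opposite algebra. -/
def rmulAlgHom (R : Type v) [Ring R] [Algebra F R] : Rᵐᵒᵖ →ₐ[F] Module.End F R where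
  toFun b :=
    { toFun := fun x => x * b.unop
      map_add' := fun x y => add_mul x y b.unop
      map_smul' := fun c x => smul_mul_assoc c x b.unop }
  map_one' := by ext x; simp
  map_mul' b c := by
    ext x
    simp [mul_assoc]
  map_zero' := by ext x; simp
  map_add' b c := by ext x; simp [mul_add]
  commutes' c := by
    ext x
    simp [Algebra.algebraMap_eq_smul_one, Module.algebraMap_end_apply, mul_smul_comm]

/-- The map `R ⊗ Rᵐᵒᵖ → End F R`, `a ⊗ b ↦ (x ↦ a * x * b.unop)`. -/
noncomputable def mulMap (R : Type v) [Ring R] [Algebra F R] :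
    R ⊗[F] Rᵐᵒᵖ →ₐ[F] Module.End F R :=
  Algebra.TensorProduct.lift (Algebra.lmul F R) (rmulAlgHom F R) (fun a b => by
    ext x
    simp [rmulAlgHom, mul_assoc])

lemma mulMap_tmul (R : Type v) [Ring R] [Algebra F R] (a : R) (b : Rᵐᵒᵖ) (x : R) :
    mulMap F R (a ⊗ₜ[F] b) x = a * x * b.unop := by
  simp [mulMap, rmulAlgHom, mul_assoc]

/-- In a simple ring, every nonzero element generates the unit ideal. -/
lemma exists_sum_mul_eq_one (R : Type v) [Ring R] [IsSimpleRing R] {a : R} (ha : a ≠ 0) :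
    ∃ (n : ℕ) (u v : Fin n → R), ∑ k, u k * a * v k = 1 := by
  classical
  set C : Set R := {x | ∃ s : Multiset (R × R), x = (s.map fun p => p.1 * a * p.2).sum} with hC
  have hzero : (0 : R) ∈ C := ⟨0, by simp⟩
  have hadd : ∀ {x y : R}, x ∈ C → y ∈ C → x + y ∈ C := by
    rintro x y ⟨s, rfl⟩ ⟨t, rfl⟩
    exact ⟨s + t, by simp⟩
  have hneg : ∀ {x : R}, x ∈ C → -x ∈ C := by
    rintro x ⟨s, rfl⟩
    refine ⟨s.map fun p => (-p.1, p.2), ?_⟩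
    rw [Multiset.map_map, ← Multiset.sum_map_neg']
    simp
  have hleft : ∀ {x y : R}, y ∈ C → x * y ∈ C := by
    rintro x y ⟨s, rfl⟩
    refine ⟨s.map fun p => (x * p.1, p.2), ?_⟩
    rw [Multiset.map_map, ← Multiset.sum_map_mul_left]
    simp [mul_assoc]
  have hright : ∀ {x y : R}, x ∈ C → x * y ∈ C := by
    rintro x y ⟨s, rfl⟩
    refine ⟨s.map fun p => (p.1, p.2 * y), ?_⟩
    rw [Multiset.map_map, ← Multiset.sum_map_mul_right]
    simp [mul_assoc]
  set J : TwoSidedIdeal R := TwoSidedIdeal.mk' C hzero hadd hneg hleft hright with hJ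
  have haJ : a ∈ J := by
    rw [hJ, TwoSidedIdeal.mem_mk']
    exact ⟨{(1, 1)}, by simp⟩
  have hJtop : J = ⊤ := by
    rcases IsSimpleRing.simple.eq_bot_or_eq_top J with h | h
    · rw [h, TwoSidedIdeal.mem_bot] at haJ
      exact absurd haJ ha
    · exact h
  have h1 : (1 : R) ∈ J := by rw [hJtop]; trivial
  rw [hJ, TwoSidedIdeal.mem_mk'] at h1
  obtain ⟨s, hs⟩ := h1
  obtain ⟨l, hl⟩ : ∃ l : List (R × R), s = (l : Multiset (R × R)) := ⟨s.toList, by simp⟩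
  refine ⟨l.length, fun k => (l.get k).1, fun k => (l.get k).2, ?_⟩
  rw [hl] at hs
  have hmap : l.map (fun p => p.1 * a * p.2) =
      List.ofFn (fun k => (l.get k).1 * a * (l.get k).2) := by
    conv_lhs => rw [← List.ofFn_get l]
    rw [List.map_ofFn]
    rfl
  rw [hs, Multiset.map_coe, Multiset.sum_coe, hmap, List.sum_ofFn]


/-- Every element of `A ⊗ B` can be written with coefficients along a finite basis of `B`. -/
lemma exists_repr_right {A : Type v} {B : Type w} [AddCommGroup A] [Module F A]
    [AddCommGroup B] [Module F B] {ι : Type*} [Fintype ι] (b : Module.Basis ι F B)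
    (z : A ⊗[F] B) : ∃ a : ι → A, z = ∑ i, a i ⊗ₜ[F] b i := by
  classical
  induction z with
  | zero => exact ⟨0, by simp⟩
  | tmul x y =>
      refine ⟨fun i => b.repr y i • x, ?_⟩
      calc x ⊗ₜ[F] y = x ⊗ₜ[F] (∑ i, b.repr y i • b i) := by rw [b.sum_repr]
        _ = ∑ i, (b.repr y i • x) ⊗ₜ[F] b i := by
            rw [TensorProduct.tmul_sum]
            exact Finset.sum_congr rfl fun i _ => (TensorProduct.smul_tmul _ _ _).symm
  | add z₁ z₂ h₁ h₂ =>
      obtain ⟨a₁, rfl⟩ := h₁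
      obtain ⟨a₂, rfl⟩ := h₂
      exact ⟨a₁ + a₂, by simp [TensorProduct.add_tmul, Finset.sum_add_distrib]⟩

section Inj
variable (R : Type v) [Ring R] [Algebra F R] [IsSimpleRing R] [Algebra.IsCentral F R]

lemma mulMap_indep_ker : ∀ (n : ℕ) (a : Fin n → R) (b : Fin n → Rᵐᵒᵖ),
    LinearIndependent F b → mulMap F R (∑ i, a i ⊗ₜ[F] b i) = 0 → ∀ i, a i = 0 := by
  classical
  intro n
  induction n with
  | zero => exact fun a b _ _ i => absurd i.2 (by omega)
  | succ n IH =>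
      intro a b hb hker
      -- first show `a 0 = 0`
      have ha0 : a 0 = 0 := by
        by_contra h0
        obtain ⟨m, u, v, huv⟩ := exists_sum_mul_eq_one R h0
        set a' : Fin (n + 1) → R := fun i => ∑ k, u k * a i * v k with ha'
        have ha'0 : a' 0 = 1 := huv
        set z' : R ⊗[F] Rᵐᵒᵖ := ∑ i, a' i ⊗ₜ[F] b i with hz'
        have hz'eq : z' = ∑ k, (u k ⊗ₜ[F] (1 : Rᵐᵒᵖ)) * (∑ i, a i ⊗ₜ[F] b i) *
            (v k ⊗ₜ[F] (1 : Rᵐᵒᵖ)) := by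
          have hk : ∀ k : Fin m, (u k ⊗ₜ[F] (1 : Rᵐᵒᵖ)) * (∑ i, a i ⊗ₜ[F] b i) *
              (v k ⊗ₜ[F] (1 : Rᵐᵒᵖ)) = ∑ i, (u k * a i * v k) ⊗ₜ[F] b i := by
            intro k
            rw [Finset.mul_sum, Finset.sum_mul]
            refine Finset.sum_congr rfl fun i _ => ?_
            simp [Algebra.TensorProduct.tmul_mul_tmul, mul_assoc]
          rw [hz']
          simp only [hk]
          rw [Finset.sum_comm]
          exact Finset.sum_congr rfl fun i _ => (TensorProduct.sum_tmul _ _ _)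
        have hker' : mulMap F R z' = 0 := by
          rw [hz'eq, map_sum]
          refine Finset.sum_eq_zero fun k _ => ?_
          rw [map_mul, map_mul, hker, mul_zero, zero_mul]
        -- commutators vanish
        have hcomm : ∀ (r : R) (j : Fin n), r * a' j.succ = a' j.succ * r := by
          intro r j
          have hc : mulMap F R (∑ i : Fin (n+1), (r * a' i - a' i * r) ⊗ₜ[F] b i) = 0 := by
            have : (∑ i : Fin (n+1), (r * a' i - a' i * r) ⊗ₜ[F] b i) =
                (r ⊗ₜ[F] (1 : Rᵐᵒᵖ)) * z' - z' * (r ⊗ₜ[F] (1 : Rᵐᵒᵖ)) := by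
              rw [hz', Finset.mul_sum, Finset.sum_mul, ← Finset.sum_sub_distrib]
              refine Finset.sum_congr rfl fun i _ => ?_
              rw [Algebra.TensorProduct.tmul_mul_tmul, Algebra.TensorProduct.tmul_mul_tmul,
                one_mul, mul_one, TensorProduct.sub_tmul]
            rw [this, map_sub, map_mul, map_mul, hker', mul_zero, zero_mul, sub_zero]
          have htail : (∑ i : Fin (n+1), (r * a' i - a' i * r) ⊗ₜ[F] b i) =
              ∑ j : Fin n, (r * a' j.succ - a' j.succ * r) ⊗ₜ[F] b j.succ := by
            rw [Fin.sum_univ_succ, ha'0]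
            simp
          rw [htail] at hc
          have := IH (fun j => r * a' j.succ - a' j.succ * r) (fun j => b j.succ)
            (hb.comp Fin.succ (Fin.succ_injective n)) hc j
          exact sub_eq_zero.mp this
        -- each tail coefficient is central, hence a scalar
        have hscal : ∀ j : Fin n, ∃ lam : F, a' j.succ = algebraMap F R lam := by
          intro j
          have hc : a' j.succ ∈ Subalgebra.center F R :=
            Subalgebra.mem_center_iff.mpr fun r => hcomm r j
          have := Algebra.IsCentral.out (K := F) (D := R) hc
          rw [Algebra.mem_bot] at this
          obtain ⟨lam, hlam⟩ := this
          exact ⟨lam, hlam.symm⟩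
        choose lam hlam using hscal
        -- hence `z' = 1 ⊗ β` with `β ≠ 0`
        set beta : Rᵐᵒᵖ := b 0 + ∑ j : Fin n, lam j • b j.succ with hbeta
        have hz'beta : z' = (1 : R) ⊗ₜ[F] beta := by
          rw [hz', Fin.sum_univ_succ, ha'0, hbeta, TensorProduct.tmul_add,
            TensorProduct.tmul_sum]
          congr 1
          refine Finset.sum_congr rfl fun j _ => ?_
          rw [hlam, Algebra.algebraMap_eq_smul_one, TensorProduct.smul_tmul]
        have hbeta0 : beta = 0 := by
          have h1 : mulMap F R z' 1 = 0 := by rw [hker']; rfl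
          rw [hz'beta, mulMap_tmul, one_mul, one_mul] at h1
          exact MulOpposite.unop_injective h1
        -- contradiction with linear independence
        have : (1 : F) = 0 := by
          have hsum : ∑ i : Fin (n + 1), (Fin.cons 1 lam : Fin (n+1) → F) i • b i = 0 := by
            rw [Fin.sum_univ_succ]
            simpa [hbeta] using hbeta0
          exact Fintype.linearIndependent_iff.mp hb (Fin.cons 1 lam) hsum 0
        exact one_ne_zero this
      -- now the tail
      have htail : ∀ j : Fin n, a j.succ = 0 := by
        have hz : (∑ i : Fin (n+1), a i ⊗ₜ[F] b i) =
            ∑ j : Fin n, a j.succ ⊗ₜ[F] b j.succ := by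
          rw [Fin.sum_univ_succ, ha0]
          simp
        rw [hz] at hker
        exact IH (fun j => a j.succ) (fun j => b j.succ)
          (hb.comp Fin.succ (Fin.succ_injective n)) hker
      intro i
      rcases Fin.eq_zero_or_eq_succ i with rfl | ⟨j, rfl⟩
      · exact ha0
      · exact htail j

variable [FiniteDimensional F R]

lemma mulMap_injective : Function.Injective (mulMap F R) := by
  classical
  have : ∀ z : R ⊗[F] Rᵐᵒᵖ, mulMap F R z = 0 → z = 0 := by
    intro z hz
    obtain ⟨a, rfl⟩ := exists_repr_right F (Module.finBasis F Rᵐᵒᵖ) z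
    have := mulMap_indep_ker F R _ a (Module.finBasis F Rᵐᵒᵖ)
      (Module.finBasis F Rᵐᵒᵖ).linearIndependent hz
    simp only [this]
    simp
  intro x y hxy
  have := this (x - y) (by rw [map_sub, hxy, sub_self])
  exact sub_eq_zero.mp this

lemma mulMap_bijective : Function.Bijective (mulMap F R) := by
  have hrank : Module.finrank F (R ⊗[F] Rᵐᵒᵖ) = Module.finrank F (Module.End F R) := by
    rw [Module.finrank_tensorProduct, Module.finrank_linearMap,
      (MulOpposite.opLinearEquiv F (M := R)).symm.finrank_eq]
  exact ⟨mulMap_injective F R,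
    (LinearMap.injective_iff_surjective_of_finrank_eq_finrank hrank
      (f := (mulMap F R).toLinearMap)).mp (mulMap_injective F R)⟩

/-- For a finite-dimensional central simple algebra, `R ⊗ Rᵐᵒᵖ ≅ End F R`. -/
noncomputable def mulEquiv : (R ⊗[F] Rᵐᵒᵖ) ≃ₐ[F] Module.End F R :=
  AlgEquiv.ofBijective (mulMap F R) (mulMap_bijective F R)


/-- A "trace-like" projection: in a central simple algebra there are `u k, v k` and a
functional `f` with `f 1 = 1` such that `∑ k, u k * y * v k = f y • 1` for all `y`. -/
lemma exists_proj :
    ∃ (n : ℕ) (u v : Fin n → R) (f : R →ₗ[F] F), f 1 = 1 ∧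
      ∀ y : R, ∑ k, u k * y * v k = f y • (1 : R) := by
  classical
  -- a functional with `f 1 = 1`
  obtain ⟨q, hq⟩ := Submodule.exists_isCompl (Submodule.span F ({1} : Set R))
  set eq1 := LinearEquiv.toSpanNonzeroSingleton F R (1 : R) one_ne_zero
  set f : R →ₗ[F] F := (eq1.symm.toLinearMap).comp
    ((Submodule.linearProjOfIsCompl _ q hq) : R →ₗ[F] _) with hf
  have hf1 : f (1 : R) = 1 := by
    have h1mem : (1 : R) ∈ Submodule.span F ({1} : Set R) := Submodule.mem_span_singleton_self _
    have : Submodule.linearProjOfIsCompl _ q hq (1 : R) = ⟨1, h1mem⟩ :=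
      Submodule.linearProjOfIsCompl_apply_left hq ⟨1, h1mem⟩
    rw [hf]
    simp only [LinearMap.coe_comp, Function.comp_apply, this]
    have : eq1 (1 : F) = ⟨1, h1mem⟩ := by
      apply Subtype.ext
      simp [eq1, LinearEquiv.toSpanNonzeroSingleton]
    rw [← this]
    exact eq1.symm_apply_apply 1
  -- the endomorphism `y ↦ f y • 1` has a preimage under `mulMap`
  set T : Module.End F R := (LinearMap.toSpanSingleton F R (1 : R)).comp f with hT
  obtain ⟨z, hz⟩ := (mulMap_bijective F R).2 T
  obtain ⟨a, rfl⟩ := exists_repr_right F (Module.finBasis F Rᵐᵒᵖ) z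
  refine ⟨_, a, fun k => (Module.finBasis F Rᵐᵒᵖ k).unop, f, hf1, fun y => ?_⟩
  have := congrFun (congrArg (fun (g : Module.End F R) => (g : R → R)) hz) y
  simp only [hT, LinearMap.coe_comp, Function.comp_apply, LinearMap.toSpanSingleton_apply] at this
  rw [← this, map_sum, LinearMap.coe_sum, Finset.sum_apply]
  exact Finset.sum_congr rfl fun k _ => (mulMap_tmul F R _ _ y).symm

end Inj

section Central

variable (R : Type v) [Ring R] [Algebra F R] [IsSimpleRing R] [Algebra.IsCentral F R]
  [FiniteDimensional F R]

/-- The opposite version of `exists_proj`. -/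
lemma exists_proj_op :
    ∃ (n : ℕ) (u v : Fin n → Rᵐᵒᵖ) (f : Rᵐᵒᵖ →ₗ[F] F), f 1 = 1 ∧
      ∀ y : Rᵐᵒᵖ, ∑ k, u k * y * v k = f y • (1 : Rᵐᵒᵖ) := by
  obtain ⟨n, u, v, f, hf1, hproj⟩ := exists_proj F R
  refine ⟨n, fun k => MulOpposite.op (v k), fun k => MulOpposite.op (u k),
    f.comp ((MulOpposite.opLinearEquiv F (M := R)).symm : Rᵐᵒᵖ →ₗ[F] R), by simpa using hf1,
    fun y => ?_⟩
  have step : ∀ k : Fin n, MulOpposite.op (v k) * y * MulOpposite.op (u k)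
      = MulOpposite.op (u k * y.unop * v k) := by
    intro k
    rw [← MulOpposite.op_unop y, ← MulOpposite.op_mul, ← MulOpposite.op_mul,
      MulOpposite.unop_op, mul_assoc]
  have hsum : ∑ k : Fin n, MulOpposite.op (u k * MulOpposite.unop y * v k)
      = MulOpposite.op (∑ k : Fin n, u k * MulOpposite.unop y * v k) := by
    have := map_sum (MulOpposite.opAddEquiv (α := R)).toAddMonoidHom
      (fun k : Fin n => u k * MulOpposite.unop y * v k) Finset.univ
    simp only [AddEquiv.coe_toAddMonoidHom, MulOpposite.opAddEquiv_apply] at this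
    exact this.symm
  rw [Finset.sum_congr rfl fun k _ => step k, hsum, hproj y.unop]
  apply MulOpposite.unop_injective
  simp

/-- Elements of `A ⊗ Rᵐᵒᵖ` commuting with `1 ⊗ Rᵐᵒᵖ` lie in `A ⊗ 1`. -/
lemma centralizer_right (A : Type w) [Ring A] [Algebra F A] (z : A ⊗[F] Rᵐᵒᵖ)
    (hz : ∀ b : Rᵐᵒᵖ, z * ((1 : A) ⊗ₜ[F] b) = ((1 : A) ⊗ₜ[F] b) * z) :
    ∃ a : A, z = a ⊗ₜ[F] (1 : Rᵐᵒᵖ) := by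
  classical
  obtain ⟨n, u, v, f, hf1, hproj⟩ := exists_proj_op F R
  set Q : A ⊗[F] Rᵐᵒᵖ →ₗ[F] A :=
    (TensorProduct.rid F A).toLinearMap.comp (LinearMap.lTensor A f) with hQ
  have key : ∀ w : A ⊗[F] Rᵐᵒᵖ,
      ∑ k, ((1 : A) ⊗ₜ[F] u k) * w * ((1 : A) ⊗ₜ[F] v k) = Q w ⊗ₜ[F] (1 : Rᵐᵒᵖ) := by
    intro w
    induction w with
    | zero => simp
    | tmul x y =>
        have : ∀ k : Fin n, ((1 : A) ⊗ₜ[F] u k) * (x ⊗ₜ[F] y) * ((1 : A) ⊗ₜ[F] v k) =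
            x ⊗ₜ[F] (u k * y * v k) := by
          intro k
          simp [Algebra.TensorProduct.tmul_mul_tmul, mul_assoc]
        simp only [this]
        rw [← TensorProduct.tmul_sum, hproj y, hQ]
        simp only [LinearMap.coe_comp, Function.comp_apply, LinearMap.lTensor_tmul,
          LinearEquiv.coe_coe, TensorProduct.rid_tmul]
        exact (TensorProduct.smul_tmul _ _ _).symm
    | add w₁ w₂ h₁ h₂ =>
        simp only [mul_add, add_mul, Finset.sum_add_distrib, h₁, h₂, map_add,
          TensorProduct.add_tmul]
  have hzz : ∑ k, ((1 : A) ⊗ₜ[F] u k) * z * ((1 : A) ⊗ₜ[F] v k) = z := by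
    have : ∀ k : Fin n, ((1 : A) ⊗ₜ[F] u k) * z * ((1 : A) ⊗ₜ[F] v k) =
        z * ((1 : A) ⊗ₜ[F] (u k * v k)) := by
      intro k
      rw [← hz (u k), mul_assoc, Algebra.TensorProduct.tmul_mul_tmul]
      simp
    simp only [this]
    rw [← Finset.mul_sum, ← TensorProduct.tmul_sum]
    have : ∑ k, u k * v k = (1 : Rᵐᵒᵖ) := by
      have := hproj 1
      simpa [hf1] using this
    rw [this, ← Algebra.TensorProduct.one_def, mul_one]
  exact ⟨Q z, by rw [← key z, hzz]⟩

/-- `a ↦ a ⊗ 1` is injective into `A ⊗ Rᵐᵒᵖ`. -/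
lemma tmul_one_injective (A : Type w) [Ring A] [Algebra F A] :
    Function.Injective (fun a : A => a ⊗ₜ[F] (1 : Rᵐᵒᵖ)) := by
  obtain ⟨n, u, v, f, hf1, hproj⟩ := exists_proj_op F R
  intro a a' haa'
  have h2 := congrArg ((TensorProduct.rid F A).toLinearMap.comp (LinearMap.lTensor A f)) haa'
  simpa [hf1] using h2

end Central

section Main

variable (S : Type w) [Ring S] [Algebra F S]
variable (R : Type v) [Ring R] [Algebra F R] [FiniteDimensional F R] [IsSimpleRing R]
  [Algebra.IsCentral F R]

/-- `R ⊗ Rᵐᵒᵖ ≅ Mₘ(F)`. -/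
noncomputable def eMat : (R ⊗[F] Rᵐᵒᵖ) ≃ₐ[F]
    Matrix (Fin (Module.finrank F R)) (Fin (Module.finrank F R)) F :=
  (mulEquiv F R).trans (algEquivMatrix (Module.finBasis F R))

/-- The big identification `(R ⊗ S) ⊗ Rᵐᵒᵖ ≅ Mₘ(S)`. -/
noncomputable def gMat : ((R ⊗[F] S) ⊗[F] Rᵐᵒᵖ) ≃ₐ[F]
    Matrix (Fin (Module.finrank F R)) (Fin (Module.finrank F R)) S :=
  (Algebra.TensorProduct.assoc F F F R S Rᵐᵒᵖ).trans <|
  (Algebra.TensorProduct.congr (AlgEquiv.refl (A₁ := R))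
      (Algebra.TensorProduct.comm F S Rᵐᵒᵖ)).trans <|
  ((Algebra.TensorProduct.assoc F F F R Rᵐᵒᵖ S).symm).trans <|
  (Algebra.TensorProduct.congr (eMat F R) (AlgEquiv.refl (A₁ := S))).trans <|
  ((Algebra.TensorProduct.comm F
      (Matrix (Fin (Module.finrank F R)) (Fin (Module.finrank F R)) F) S).trans
    (matrixEquivTensor (Fin (Module.finrank F R)) F S).symm)

lemma gMat_tmul (x : R) (b : Rᵐᵒᵖ) :
    gMat F S R ((x ⊗ₜ[F] (1 : S)) ⊗ₜ[F] b) = (eMat F R (x ⊗ₜ[F] b)).map (algebraMap F S) := by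
  rw [gMat]
  simp only [AlgEquiv.trans_apply, Algebra.TensorProduct.assoc_tmul,
    Algebra.TensorProduct.congr_apply, Algebra.TensorProduct.map_tmul,
    AlgEquiv.coe_refl, AlgHom.coe_coe, id_eq, Algebra.TensorProduct.comm_tmul,
    Algebra.TensorProduct.assoc_symm_tmul, matrixEquivTensor_apply_symm]
  simp [Matrix.map]

end Main

set_option maxHeartbeats 1600000 in
theorem skolemNoether_of_matrix' (S : Type w) [Ring S] [Algebra F S]
    (h : ∀ (n : ℕ) (φ : Matrix (Fin n) (Fin n) F →ₐ[F] Matrix (Fin n) (Fin n) S),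
      ∃ c : (Matrix (Fin n) (Fin n) S)ˣ, ∀ x : Matrix (Fin n) (Fin n) F,
        φ x = Units.val c * x.map (algebraMap F S) * Units.val c⁻¹)
    (R : Type v) [Ring R] [Algebra F R] (hfd : FiniteDimensional F R)
    (hs : IsSimpleRing R) (hc : Algebra.IsCentral F R) (φ : R →ₐ[F] R ⊗[F] S) :
    ∃ c : (R ⊗[F] S)ˣ, ∀ x : R,
      φ x = Units.val c * (x ⊗ₜ[F] (1 : S)) * Units.val c⁻¹ := by
  classical
  obtain ⟨C, hC⟩ := h (Module.finrank F R)
    ((gMat F S R).toAlgHom.comp ((Algebra.TensorProduct.map φ (AlgHom.id F Rᵐᵒᵖ)).comp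
      (eMat F R).symm.toAlgHom))
  -- the master equation
  have master : ∀ (r : R) (b : Rᵐᵒᵖ),
      (φ r) ⊗ₜ[F] b = ((gMat F S R).symm (Units.val C)) * ((r ⊗ₜ[F] (1 : S)) ⊗ₜ[F] b) *
        ((gMat F S R).symm (Units.val C⁻¹)) := by
    intro r b
    have h1 := hC (eMat F R (r ⊗ₜ[F] b))
    have h2 : ((gMat F S R).toAlgHom.comp ((Algebra.TensorProduct.map φ (AlgHom.id F Rᵐᵒᵖ)).comp
        (eMat F R).symm.toAlgHom)) (eMat F R (r ⊗ₜ[F] b)) = gMat F S R ((φ r) ⊗ₜ[F] b) := by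
      simp only [AlgHom.coe_comp, Function.comp_apply, AlgEquiv.coe_algHom]
      rw [AlgEquiv.symm_apply_apply, Algebra.TensorProduct.map_tmul]
      rfl
    rw [h2] at h1
    apply (gMat F S R).injective
    rw [map_mul, map_mul, AlgEquiv.apply_symm_apply, AlgEquiv.apply_symm_apply,
      gMat_tmul F S R r b]
    exact h1
  have hUV : ((gMat F S R).symm (Units.val C)) * ((gMat F S R).symm (Units.val C⁻¹)) = 1 := by
    rw [← map_mul, Units.mul_inv, map_one]
  have hVU : ((gMat F S R).symm (Units.val C⁻¹)) * ((gMat F S R).symm (Units.val C)) = 1 := by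
    rw [← map_mul, Units.inv_mul, map_one]
  -- U and V commute with 1 ⊗ Rᵐᵒᵖ
  have honeb : ∀ b : Rᵐᵒᵖ, ((1 : R ⊗[F] S) ⊗ₜ[F] b) =
      ((gMat F S R).symm (Units.val C)) * ((1 : R ⊗[F] S) ⊗ₜ[F] b) *
        ((gMat F S R).symm (Units.val C⁻¹)) := by
    intro b
    have hm := master 1 b
    rw [map_one, ← Algebra.TensorProduct.one_def] at hm
    exact hm
  have hUcomm : ∀ b : Rᵐᵒᵖ, ((gMat F S R).symm (Units.val C)) * ((1 : R ⊗[F] S) ⊗ₜ[F] b) =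
      ((1 : R ⊗[F] S) ⊗ₜ[F] b) * ((gMat F S R).symm (Units.val C)) := by
    intro b
    conv_rhs => rw [honeb b]
    rw [mul_assoc, mul_assoc, hVU, mul_one]
  have hVcomm : ∀ b : Rᵐᵒᵖ, ((gMat F S R).symm (Units.val C⁻¹)) * ((1 : R ⊗[F] S) ⊗ₜ[F] b) =
      ((1 : R ⊗[F] S) ⊗ₜ[F] b) * ((gMat F S R).symm (Units.val C⁻¹)) := by
    intro b
    conv_lhs => rw [honeb b]
    rw [← mul_assoc, ← mul_assoc, hVU, one_mul]
  obtain ⟨c₀, hc₀⟩ := centralizer_right F R (R ⊗[F] S) _ hUcomm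
  obtain ⟨d₀, hd₀⟩ := centralizer_right F R (R ⊗[F] S) _ hVcomm
  rw [hc₀] at master hUV hVU
  rw [hd₀] at master hUV hVU
  have hcd : c₀ * d₀ = 1 := by
    apply tmul_one_injective F R (R ⊗[F] S)
    show (c₀ * d₀) ⊗ₜ[F] (1 : Rᵐᵒᵖ) = (1 : R ⊗[F] S) ⊗ₜ[F] (1 : Rᵐᵒᵖ)
    rw [← one_mul (1 : Rᵐᵒᵖ), ← Algebra.TensorProduct.tmul_mul_tmul, hUV,
      Algebra.TensorProduct.one_def, one_mul]
  have hdc : d₀ * c₀ = 1 := by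
    apply tmul_one_injective F R (R ⊗[F] S)
    show (d₀ * c₀) ⊗ₜ[F] (1 : Rᵐᵒᵖ) = (1 : R ⊗[F] S) ⊗ₜ[F] (1 : Rᵐᵒᵖ)
    rw [← one_mul (1 : Rᵐᵒᵖ), ← Algebra.TensorProduct.tmul_mul_tmul, hVU,
      Algebra.TensorProduct.one_def, one_mul]
  refine ⟨⟨c₀, d₀, hcd, hdc⟩, fun x => ?_⟩
  apply tmul_one_injective F R (R ⊗[F] S)
  show (φ x) ⊗ₜ[F] (1 : Rᵐᵒᵖ) = (c₀ * (x ⊗ₜ[F] (1 : S)) * d₀) ⊗ₜ[F] (1 : Rᵐᵒᵖ)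
  rw [master x 1, Algebra.TensorProduct.tmul_mul_tmul, Algebra.TensorProduct.tmul_mul_tmul]
  simp

end Aux

theorem skolemNoether_of_matrix (F : Type u) (S : Type v)
    [Field F] [Ring S] [Algebra F S]
    (h : ∀ (n : ℕ) (φ : Matrix (Fin n) (Fin n) F →ₐ[F] Matrix (Fin n) (Fin n) S),
      ∃ c : (Matrix (Fin n) (Fin n) S)ˣ, ∀ x : Matrix (Fin n) (Fin n) F,
        φ x = Units.val c * x.map (algebraMap F S) * Units.val c⁻¹) :
    IsSkolemNoether F S := by
  intro R _ _ hfd hs hc φ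
  exact skolemNoether_of_matrix' F S h R hfd hs hc φ
end

section
/- Let R be a central simple algebra and let S be a Skolem–Noether F-algebra. Then every F-algebra automorphism φ of R ⊗ S is the composition of an inner automorphism and an automorphism of the form id_R ⊗ σ where σ is an F-algebra automorphism of S; that is, there exist an invertible element c ∈ R ⊗ S and an F-algebra automorphism σ of S such that φ(x ⊗ s) = c (x ⊗ σ(s)) c⁻¹ for all x ∈ R and s ∈ S. -/
open scoped TensorProduct

universe u v w

section Aux
variable {F : Type*} {R : Type*} {S : Type*}
    [Field F] [Ring R] [Algebra F R] [Ring S] [Algebra F S]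

open scoped Classical in
/-- Auxiliary linear equivalence expressing `R ⊗[F] S` in coordinates relative to a basis
of `S` over `F`. -/
noncomputable def auxE : (R ⊗[F] S) ≃ₗ[F] ((Module.Basis.ofVectorSpaceIndex F S) →₀ R) :=
  (TensorProduct.congr (LinearEquiv.refl F R) (Module.Basis.ofVectorSpace F S).repr) ≪≫ₗ
    TensorProduct.finsuppScalarRight F F R _

lemma auxE_tmul (r : R) (s : S) (i) :
    auxE (F := F) (r ⊗ₜ[F] s) i = (Module.Basis.ofVectorSpace F S).repr s i • r := by
  simp [auxE]

lemma auxE_symm_single (i) (r : R) :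
    (auxE (F := F) (R := R) (S := S)).symm (Finsupp.single i r)
      = r ⊗ₜ[F] (Module.Basis.ofVectorSpace F S) i := by
  simp [auxE]

lemma tmul_one_left_injective [Nontrivial R] :
    Function.Injective (fun s : S => (1 : R) ⊗ₜ[F] s) := by
  intro s t h
  dsimp only at h
  have h3 : (Module.Basis.ofVectorSpace F S).repr s = (Module.Basis.ofVectorSpace F S).repr t := by
    ext i
    have h2 : ((Module.Basis.ofVectorSpace F S).repr s) i • (1:R)
        = ((Module.Basis.ofVectorSpace F S).repr t) i • (1:R) := by
      rw [← auxE_tmul (F := F) (1:R) s i, ← auxE_tmul (F := F) (1:R) t i, h]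
    exact (algebraMap F R).injective (by simpa [Algebra.algebraMap_eq_smul_one] using h2)
  exact (Module.Basis.ofVectorSpace F S).repr.injective h3

/-- The centralizer of `R ⊗ 1` in `R ⊗[F] S` is `1 ⊗ S` when `R` is central over `F`. -/
lemma exists_tmul_of_commute [Algebra.IsCentral F R] [Nontrivial R]
    (a : R ⊗[F] S) (h : ∀ x : R, (x ⊗ₜ[F] (1 : S)) * a = a * (x ⊗ₜ[F] (1 : S))) :
    ∃ s : S, a = (1 : R) ⊗ₜ[F] s := by
  classical
  have hL : ∀ (x : R) (t : R ⊗[F] S) (i),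
      auxE (F := F) ((x ⊗ₜ[F] (1:S)) * t) i = x * auxE (F := F) t i := by
    intro x t i
    induction t using TensorProduct.induction_on with
    | zero => simp
    | tmul r s =>
        rw [Algebra.TensorProduct.tmul_mul_tmul, one_mul, auxE_tmul, auxE_tmul, mul_smul_comm]
    | add p q hp hq =>
        rw [mul_add, map_add, Finsupp.add_apply, hp, hq, map_add, Finsupp.add_apply, mul_add]
  have hR : ∀ (x : R) (t : R ⊗[F] S) (i),
      auxE (F := F) (t * (x ⊗ₜ[F] (1:S))) i = auxE (F := F) t i * x := by
    intro x t i
    induction t using TensorProduct.induction_on with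
    | zero => simp
    | tmul r s =>
        rw [Algebra.TensorProduct.tmul_mul_tmul, mul_one, auxE_tmul, auxE_tmul, smul_mul_assoc]
    | add p q hp hq =>
        rw [add_mul, map_add, Finsupp.add_apply, hp, hq, map_add, Finsupp.add_apply, add_mul]
  have hcen : ∀ i, auxE (F := F) a i ∈ (⊥ : Subalgebra F R) := by
    intro i
    rw [← Algebra.IsCentral.center_eq_bot F R, Subalgebra.mem_center_iff]
    intro x
    rw [← hL x a i, ← hR x a i, h x]
  have key : a ∈ LinearMap.range (TensorProduct.mk F R S 1) := by
    have ha : a = (auxE (F := F) a).sum fun i r =>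
        (auxE (F := F) (R := R) (S := S)).symm (Finsupp.single i r) := by
      conv_lhs => rw [← (auxE (F := F) (R := R) (S := S)).symm_apply_apply a,
        ← Finsupp.sum_single (auxE (F := F) a)]
      rw [map_finsuppSum]
    rw [ha]
    refine Submodule.finsuppSum_mem _ _ _ _ (fun i _ => ?_)
    obtain ⟨g, hg⟩ := Algebra.mem_bot.1 (hcen i)
    rw [auxE_symm_single, ← hg, Algebra.algebraMap_eq_smul_one, TensorProduct.smul_tmul]
    exact ⟨g • (Module.Basis.ofVectorSpace F S) i, rfl⟩
  obtain ⟨s, hs⟩ := key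
  exact ⟨s, hs.symm⟩

end Aux

theorem aut_tensor_of_skolemNoether (F : Type u) (R : Type u) (S : Type v)
    [Field F] [Ring R] [Algebra F R] [Ring S] [Algebra F S]
    [FiniteDimensional F R] [IsSimpleRing R] [Algebra.IsCentral F R]
    (hS : IsSkolemNoether F S) (φ : (R ⊗[F] S) ≃ₐ[F] (R ⊗[F] S)) :
    ∃ (c : (R ⊗[F] S)ˣ) (σ : S ≃ₐ[F] S), ∀ (x : R) (s : S),
      φ (x ⊗ₜ[F] s) = Units.val c * (x ⊗ₜ[F] σ s) * Units.val c⁻¹ := by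
  classical
  haveI : Nontrivial R := inferInstance
  obtain ⟨c, hc⟩ := hS R ‹_› ‹_› ‹_›
    ((φ : (R ⊗[F] S) →ₐ[F] (R ⊗[F] S)).comp Algebra.TensorProduct.includeLeft)
  have hc' : ∀ x : R, φ (x ⊗ₜ[F] (1:S)) = ↑c * (x ⊗ₜ[F] (1:S)) * ↑c⁻¹ := by
    intro x; simpa using hc x
  have cancel : ∀ X : R ⊗[F] S, ↑c * (↑c⁻¹ * X * ↑c) * ↑c⁻¹ = X := by
    intro X; simp [mul_assoc, Units.mul_inv_cancel_left, Units.inv_mul_cancel_left]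
  have cancel' : ∀ X : R ⊗[F] S, ↑c⁻¹ * (↑c * X * ↑c⁻¹) * ↑c = X := by
    intro X; simp [mul_assoc, Units.mul_inv_cancel_left, Units.inv_mul_cancel_left]
  have conj_mul : ∀ X Y : R ⊗[F] S,
      (↑c * X * ↑c⁻¹) * (↑c * Y * ↑c⁻¹) = ↑c * (X * Y) * ↑c⁻¹ := by
    intro X Y; simp [mul_assoc, Units.inv_mul_cancel_left]
  have conj_comm : ∀ X Y : R ⊗[F] S, X * Y = Y * X →
      (↑c * X * ↑c⁻¹) * (↑c * Y * ↑c⁻¹) = (↑c * Y * ↑c⁻¹) * (↑c * X * ↑c⁻¹) := by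
    intro X Y hXY; rw [conj_mul, conj_mul, hXY]
  have hmul : ∀ z w : R ⊗[F] S, (↑c⁻¹ : R ⊗[F] S) * φ (z * w) * ↑c
      = ((↑c⁻¹ : R ⊗[F] S) * φ z * ↑c) * ((↑c⁻¹ : R ⊗[F] S) * φ w * ↑c) := by
    intro z w
    rw [map_mul]
    simp [mul_assoc, Units.mul_inv_cancel_left]
  have hfix : ∀ x : R, (↑c⁻¹ : R ⊗[F] S) * φ (x ⊗ₜ[F] (1:S)) * ↑c = x ⊗ₜ[F] (1:S) := by
    intro x; rw [hc']; exact cancel' _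
  have hcomm1 : ∀ (s : S) (x : R),
      (x ⊗ₜ[F] (1:S)) * ((↑c⁻¹ : R ⊗[F] S) * φ ((1:R) ⊗ₜ[F] s) * ↑c)
        = ((↑c⁻¹ : R ⊗[F] S) * φ ((1:R) ⊗ₜ[F] s) * ↑c) * (x ⊗ₜ[F] (1:S)) := by
    intro s x
    conv_lhs => rw [← hfix x]
    conv_rhs => rw [← hfix x]
    rw [← hmul, ← hmul, Algebra.TensorProduct.tmul_mul_tmul,
      Algebra.TensorProduct.tmul_mul_tmul, one_mul, mul_one, one_mul, mul_one]
  have key : ∀ s : S, ∃ t : S,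
      (↑c⁻¹ : R ⊗[F] S) * φ ((1:R) ⊗ₜ[F] s) * ↑c = (1:R) ⊗ₜ[F] t := by
    intro s
    obtain ⟨t, ht⟩ := exists_tmul_of_commute (F := F) (R := R) (S := S)
      ((↑c⁻¹ : R ⊗[F] S) * φ ((1:R) ⊗ₜ[F] s) * ↑c) (hcomm1 s)
    exact ⟨t, ht⟩
  set σ₀ : S → S := fun s => Classical.choose (key s) with hσ₀
  have hσ : ∀ s : S, (↑c⁻¹ : R ⊗[F] S) * φ ((1:R) ⊗ₜ[F] s) * ↑c = (1:R) ⊗ₜ[F] σ₀ s :=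
    fun s => Classical.choose_spec (key s)
  have inj1 := tmul_one_left_injective (F := F) (R := R) (S := S)
  have hφs : ∀ s : S, φ ((1:R) ⊗ₜ[F] s) = ↑c * ((1:R) ⊗ₜ[F] σ₀ s) * ↑c⁻¹ := by
    intro s
    rw [← hσ s, cancel]
  -- σ₀ is an algebra homomorphism
  have hone : σ₀ 1 = 1 := by
    apply inj1
    show (1:R) ⊗ₜ[F] σ₀ 1 = (1:R) ⊗ₜ[F] (1:S)
    rw [← hσ 1, ← Algebra.TensorProduct.one_def, map_one, mul_one, Units.inv_mul]
  have hmul₀ : ∀ s t : S, σ₀ (s * t) = σ₀ s * σ₀ t := by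
    intro s t
    apply inj1
    show (1:R) ⊗ₜ[F] σ₀ (s * t) = (1:R) ⊗ₜ[F] (σ₀ s * σ₀ t)
    rw [← hσ (s * t),
      show (1:R) ⊗ₜ[F] (s * t) = ((1:R) ⊗ₜ[F] s) * ((1:R) ⊗ₜ[F] t) by
        rw [Algebra.TensorProduct.tmul_mul_tmul, one_mul],
      hmul, hσ s, hσ t, Algebra.TensorProduct.tmul_mul_tmul, one_mul]
  have hadd₀ : ∀ s t : S, σ₀ (s + t) = σ₀ s + σ₀ t := by
    intro s t
    apply inj1
    show (1:R) ⊗ₜ[F] σ₀ (s + t) = (1:R) ⊗ₜ[F] (σ₀ s + σ₀ t)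
    rw [← hσ (s + t), TensorProduct.tmul_add, map_add, mul_add, add_mul, hσ s, hσ t,
      TensorProduct.tmul_add]
  have hcommutes : ∀ r : F, σ₀ (algebraMap F S r) = algebraMap F S r := by
    intro r
    apply inj1
    show (1:R) ⊗ₜ[F] σ₀ (algebraMap F S r) = (1:R) ⊗ₜ[F] (algebraMap F S r)
    have h1 : (1:R) ⊗ₜ[F] (algebraMap F S r) = algebraMap F (R ⊗[F] S) r := by
      rw [Algebra.algebraMap_eq_smul_one (A := S), TensorProduct.tmul_smul,
        ← Algebra.TensorProduct.one_def, ← Algebra.algebraMap_eq_smul_one]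
    rw [← hσ (algebraMap F S r), h1, AlgEquiv.commutes, ← Algebra.commutes, mul_assoc,
      Units.inv_mul, mul_one]
  have hzero : σ₀ 0 = 0 := by
    apply inj1
    show (1:R) ⊗ₜ[F] σ₀ 0 = (1:R) ⊗ₜ[F] (0:S)
    rw [← hσ 0]
    simp
  let σA : S →ₐ[F] S :=
    { toFun := σ₀, map_one' := hone, map_mul' := hmul₀, map_zero' := hzero,
      map_add' := hadd₀, commutes' := hcommutes }
  -- σ₀ is bijective
  have hinj : Function.Injective σ₀ := by
    intro s t hst
    apply inj1
    apply φ.injective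
    show φ ((1:R) ⊗ₜ[F] s) = φ ((1:R) ⊗ₜ[F] t)
    rw [hφs s, hφs t, hst]
  have hsurj : Function.Surjective σ₀ := by
    intro s
    set z : R ⊗[F] S := φ.symm (↑c * ((1:R) ⊗ₜ[F] s) * ↑c⁻¹) with hzdef
    have hφz : φ z = ↑c * ((1:R) ⊗ₜ[F] s) * ↑c⁻¹ := φ.apply_symm_apply _
    have hcomm : ∀ x : R, (x ⊗ₜ[F] (1:S)) * z = z * (x ⊗ₜ[F] (1:S)) := by
      intro x
      apply φ.injective
      rw [map_mul, map_mul, hφz, hc' x]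
      refine conj_comm _ _ ?_
      rw [Algebra.TensorProduct.tmul_mul_tmul, Algebra.TensorProduct.tmul_mul_tmul,
        one_mul, mul_one, one_mul, mul_one]
    obtain ⟨t, ht⟩ := exists_tmul_of_commute (F := F) (R := R) (S := S) z hcomm
    refine ⟨t, inj1 ?_⟩
    show (1:R) ⊗ₜ[F] σ₀ t = (1:R) ⊗ₜ[F] s
    rw [← hσ t, ← ht, hφz, cancel']
  refine ⟨c, AlgEquiv.ofBijective σA ⟨hinj, hsurj⟩, fun x s => ?_⟩
  have hσval : (AlgEquiv.ofBijective σA ⟨hinj, hsurj⟩) s = σ₀ s := rfl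
  have hx : x ⊗ₜ[F] s = (x ⊗ₜ[F] (1:S)) * ((1:R) ⊗ₜ[F] s) := by
    rw [Algebra.TensorProduct.tmul_mul_tmul, mul_one, one_mul]
  have hmix : (x ⊗ₜ[F] (1:S)) * ((1:R) ⊗ₜ[F] σ₀ s) = x ⊗ₜ[F] σ₀ s := by
    rw [Algebra.TensorProduct.tmul_mul_tmul, mul_one, one_mul]
  rw [hσval, hx, map_mul, hc' x, hφs s, conj_mul, hmix]
end

section
/- If S is a Skolem–Noether F-algebra, then every F-algebra automorphism φ of the matrix algebra Mₙ(S) is of the form φ((s_{ij})) = c (σ(s_{ij})) c⁻¹, where c is an invertible element of Mₙ(S), σ is an F-algebra automorphism of S, and (σ(s_{ij})) denotes the matrix obtained by applying σ entrywise. -/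
open scoped TensorProduct

universe u v w

section Aux

variable {F : Type*} {A : Type*} [CommSemiring F] [Ring A] [Algebra F A]

/-- Inner automorphism by a unit, as an algebra automorphism. -/
def innerAut (u : Aˣ) : A ≃ₐ[F] A where
  toFun x := ↑u * x * ↑u⁻¹
  invFun x := ↑u⁻¹ * x * ↑u
  left_inv x := by simp [mul_assoc]
  right_inv x := by simp [mul_assoc]
  map_add' x y := by noncomm_ring
  map_mul' x y := by
    simp [mul_assoc]
  commutes' r := by
    show ↑u * algebraMap F A r * ↑u⁻¹ = algebraMap F A r
    rw [mul_assoc, Algebra.commutes r (↑u⁻¹ : A), ← mul_assoc, Units.mul_inv, one_mul]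

@[simp] lemma innerAut_apply (u : Aˣ) (x : A) : (innerAut (F := F) u) x = ↑u * x * ↑u⁻¹ := rfl

end Aux

section MatAux

variable {S : Type*} [Ring S] {n : Type*} [Fintype n] [DecidableEq n]

lemma scalar_mul_stdBasisMatrix (s : S) (i j : n) :
    Matrix.scalar n s * Matrix.single i j (1 : S) = Matrix.single i j s := by
  ext k l
  simp [Matrix.scalar_apply, Matrix.diagonal_mul, Matrix.single, Matrix.of_apply]

lemma stdBasisMatrix_mul_scalar (s : S) (i j : n) :
    Matrix.single i j (1 : S) * Matrix.scalar n s = Matrix.single i j s := by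
  ext k l
  simp [Matrix.scalar_apply, Matrix.mul_diagonal, Matrix.single, Matrix.of_apply]

lemma commute_stdBasisMatrix_scalar (s : S) (i j : n) :
    Commute (Matrix.single i j (1 : S)) (Matrix.scalar n s) := by
  unfold Commute SemiconjBy
  rw [stdBasisMatrix_mul_scalar, scalar_mul_stdBasisMatrix]

end MatAux


theorem aut_matrix_of_skolemNoether (F : Type u) (S : Type v)
    [Field F] [Ring S] [Algebra F S] (hS : IsSkolemNoether F S) (n : ℕ)
    (φ : Matrix (Fin n) (Fin n) S ≃ₐ[F] Matrix (Fin n) (Fin n) S) :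
    ∃ (c : (Matrix (Fin n) (Fin n) S)ˣ) (σ : S ≃ₐ[F] S),
      ∀ M : Matrix (Fin n) (Fin n) S,
        φ M = Units.val c * M.map σ * Units.val c⁻¹ := by
  obtain _ | m := n
  · exact ⟨1, AlgEquiv.refl, fun M => Subsingleton.elim _ _⟩
  let e : (Matrix (Fin (m+1)) (Fin (m+1)) F) ⊗[F] S ≃ₐ[F] Matrix (Fin (m+1)) (Fin (m+1)) S :=
    (Algebra.TensorProduct.comm F _ S).trans (matrixEquivTensor (Fin (m+1)) F S).symm
  let ι : Matrix (Fin (m+1)) (Fin (m+1)) F →ₐ[F] Matrix (Fin (m+1)) (Fin (m+1)) S :=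
    (Algebra.ofId F S).mapMatrix
  have he : ∀ x, e (x ⊗ₜ[F] (1 : S)) = ι x := by
    intro x
    show (matrixEquivTensor (Fin (m+1)) F S).symm
      (Algebra.TensorProduct.comm F _ S (x ⊗ₜ (1 : S))) = _
    rw [Algebra.TensorProduct.comm_tmul, matrixEquivTensor_apply_symm]
    ext i j
    simp [ι, Algebra.ofId_apply, Matrix.map_apply]
  obtain ⟨c₀, hc₀⟩ := hS (Matrix (Fin (m+1)) (Fin (m+1)) F) inferInstance inferInstance
    inferInstance (e.symm.toAlgHom.comp (φ.toAlgHom.comp ι))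
  let c : (Matrix (Fin (m+1)) (Fin (m+1)) S)ˣ := Units.map e.toAlgHom.toRingHom.toMonoidHom c₀
  have hcval : Units.val c = e (Units.val c₀) := rfl
  have hcinv : Units.val c⁻¹ = e (Units.val c₀⁻¹) := rfl
  let φ' := φ.trans (innerAut (F := F) c⁻¹)
  have hφ' : ∀ M, φ' M = Units.val c⁻¹ * φ M * Units.val c := by
    intro M
    show Units.val c⁻¹ * φ M * Units.val (c⁻¹)⁻¹ = _
    rw [inv_inv]
  have hfix : ∀ x, φ' (ι x) = ι x := by
    intro x
    have h1 : φ (ι x) = e ((e.symm.toAlgHom.comp (φ.toAlgHom.comp ι)) x) := by simp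
    rw [hφ', h1, hc₀ x, map_mul, map_mul, he, ← hcval, ← hcinv]
    calc Units.val c⁻¹ * (Units.val c * ι x * Units.val c⁻¹) * Units.val c
        = (Units.val c⁻¹ * Units.val c) * ι x * (Units.val c⁻¹ * Units.val c) := by noncomm_ring
      _ = ι x := by rw [Units.inv_mul, one_mul, mul_one]
  have hι1 : ∀ i j, ι (Matrix.single i j (1 : F)) = Matrix.single i j (1 : S) := by
    intro i j
    ext k l
    simp only [ι, AlgHom.mapMatrix_apply, Matrix.map_apply, Matrix.single,
      Matrix.of_apply]
    split <;> simp [Algebra.ofId_apply]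
  have hE : ∀ i j, φ' (Matrix.single i j (1 : S)) = Matrix.single i j (1 : S) := by
    intro i j
    have := hfix (Matrix.single i j (1 : F))
    rwa [hι1] at this
  have hE' : ∀ i j, φ'.symm (Matrix.single i j (1 : S))
      = Matrix.single i j (1 : S) := by
    intro i j
    conv_lhs => rw [← hE i j]
    exact φ'.symm_apply_apply _
  -- any equiv fixing the matrix units sends scalars to scalars
  have hscalar : ∀ (ψ : Matrix (Fin (m+1)) (Fin (m+1)) S ≃ₐ[F] Matrix (Fin (m+1)) (Fin (m+1)) S),
      (∀ i j, ψ (Matrix.single i j (1 : S)) = Matrix.single i j (1 : S)) →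
      ∀ s : S, ψ (Matrix.scalar (Fin (m+1)) s)
        = Matrix.scalar (Fin (m+1)) ((ψ (Matrix.scalar (Fin (m+1)) s)) 0 0) := by
    intro ψ hψ s
    have hcomm : Pairwise fun i j =>
        Commute (Matrix.single i j (1 : S)) (ψ (Matrix.scalar (Fin (m+1)) s)) := by
      intro i j _
      show _ * _ = _ * _
      calc Matrix.single i j (1 : S) * ψ (Matrix.scalar (Fin (m+1)) s)
          = ψ (Matrix.single i j (1 : S) * Matrix.scalar (Fin (m+1)) s) := by
            rw [map_mul, hψ]
        _ = ψ (Matrix.scalar (Fin (m+1)) s * Matrix.single i j (1 : S)) := by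
            rw [stdBasisMatrix_mul_scalar, scalar_mul_stdBasisMatrix]
        _ = ψ (Matrix.scalar (Fin (m+1)) s) * Matrix.single i j (1 : S) := by
            rw [map_mul, hψ]
    obtain ⟨t, ht⟩ := Matrix.mem_range_scalar_of_commute_single hcomm
    have h00 : (Matrix.scalar (Fin (m+1)) t) 0 0 = t := by simp [Matrix.scalar_apply]
    rw [← ht, h00]
  set g : S → S := fun s => (φ' (Matrix.scalar (Fin (m+1)) s)) 0 0 with hgdef
  set g' : S → S := fun s => (φ'.symm (Matrix.scalar (Fin (m+1)) s)) 0 0 with hg'def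
  have hg : ∀ s, φ' (Matrix.scalar (Fin (m+1)) s) = Matrix.scalar (Fin (m+1)) (g s) :=
    fun s => hscalar φ' hE s
  have hg' : ∀ s, φ'.symm (Matrix.scalar (Fin (m+1)) s) = Matrix.scalar (Fin (m+1)) (g' s) :=
    fun s => hscalar φ'.symm hE' s
  have hinj : ∀ a b : S, Matrix.scalar (Fin (m+1)) a = Matrix.scalar (Fin (m+1)) b → a = b := by
    intro a b h
    have := congrFun (congrFun h 0) 0
    simpa [Matrix.scalar_apply] using this
  have hscalarAlg : ∀ r : F, Matrix.scalar (Fin (m+1)) (algebraMap F S r)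
      = algebraMap F (Matrix (Fin (m+1)) (Fin (m+1)) S) r := by
    intro r
    ext i j
    simp [Matrix.scalar_apply, Matrix.algebraMap_matrix_apply, Matrix.diagonal]
  let σ : S ≃ₐ[F] S :=
  { toFun := g
    invFun := g'
    left_inv := fun s => hinj _ _ (by rw [← hg', ← hg, φ'.symm_apply_apply])
    right_inv := fun s => hinj _ _ (by rw [← hg, ← hg', φ'.apply_symm_apply])
    map_add' := fun a b => hinj _ _ (by
      rw [map_add (Matrix.scalar (Fin (m+1))), ← hg, ← hg, ← hg, ← map_add, ← map_add])
    map_mul' := fun a b => hinj _ _ (by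
      rw [map_mul (Matrix.scalar (Fin (m+1))), ← hg, ← hg, ← hg, ← map_mul, ← map_mul])
    commutes' := fun r => hinj _ _ (by
      rw [← hg, hscalarAlg, AlgEquiv.commutes, ← hscalarAlg]) }
  have hstd : ∀ i j (s : S), φ' (Matrix.single i j s)
      = Matrix.single i j (g s) := by
    intro i j s
    rw [← scalar_mul_stdBasisMatrix, map_mul, hg, hE, scalar_mul_stdBasisMatrix]
  have hmain : ∀ M : Matrix (Fin (m+1)) (Fin (m+1)) S, φ' M = M.map g := by
    intro M
    conv_lhs => rw [Matrix.matrix_eq_sum_single M]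
    rw [map_sum]
    simp_rw [map_sum, hstd]
    conv_rhs => rw [Matrix.matrix_eq_sum_single (M.map g)]
    simp [Matrix.map_apply]
  refine ⟨c, σ, fun M => ?_⟩
  have h2 := hmain M
  rw [hφ'] at h2
  have : M.map ⇑σ = M.map g := rfl
  rw [this]
  calc φ M = Units.val c * (Units.val c⁻¹ * φ M * Units.val c) * Units.val c⁻¹ := by
        rw [← mul_assoc, ← mul_assoc, Units.mul_inv, one_mul, mul_assoc, Units.mul_inv, mul_one]
    _ = Units.val c * M.map g * Units.val c⁻¹ := by rw [h2]
end

section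
/- Let R be a central simple algebra with F-basis {r₁, …, r_d} and let S be an arbitrary F-algebra. A linear map φ : R → R ⊗ S is an F-algebra homomorphism if and only if there exist c₁, …, c_d ∈ R ⊗ S such that: (a) φ(x) = Σ_{k=1}^d c_k (x r_k ⊗ 1) for all x ∈ R; (b) φ(x) c_k = c_k (x ⊗ 1) for all x ∈ R and all k; and (c) Σ_{k=1}^d c_k (r_k ⊗ 1) = 1. Moreover, writing c_k = Σ_{l=1}^d r_l ⊗ s_{kl} with s_{kl} ∈ S, for each k and l there exists b_{kl} ∈ R ⊗ S such that b_{kl} c_k = 1 ⊗ s_{kl}; consequently, if S is stably finite and some s_{kl} is invertible in S, then c = c_k is invertible in R ⊗ S and φ(x) = c (x ⊗ 1) c⁻¹ for all x ∈ R. -/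
open scoped TensorProduct

universe u v

/-- `S` is stably finite: for all `n ≥ 1`, one-sided inverses in `Mₙ(S)` are two-sided. -/
def IsStablyFinite (S : Type v) [Ring S] : Prop :=
  ∀ n : ℕ, 1 ≤ n → ∀ x y : Matrix (Fin n) (Fin n) S, x * y = 1 → y * x = 1

section Aux

variable (F : Type u) (R : Type u) [Field F] [Ring R] [Algebra F R]

/-- The "sandwich" map `a ⊗ b ↦ (z ↦ a * z * b)`. -/
noncomputable def sandwich : R ⊗[F] R →ₗ[F] (R →ₗ[F] R) :=
  TensorProduct.lift <| LinearMap.mk₂ F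
    (fun a b => LinearMap.mulLeft F a ∘ₗ LinearMap.mulRight F b)
    (fun a a' b => by ext z; simp [add_mul])
    (fun c a b => by ext z; simp [smul_mul_assoc])
    (fun a b b' => by ext z; simp [mul_add])
    (fun c a b => by ext z; simp [mul_smul_comm])

@[simp] lemma sandwich_tmul (a b z : R) : sandwich F R (a ⊗ₜ[F] b) z = a * z * b := by
  simp [sandwich, mul_assoc]

lemma sandwich_rTensor (x : R) (t : R ⊗[F] R) (z : R) :
    sandwich F R (LinearMap.rTensor R (LinearMap.mulLeft F x) t) z
      = x * sandwich F R t z := by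
  induction t using TensorProduct.induction_on with
  | zero => simp
  | tmul a b => simp [mul_assoc]
  | add t1 t2 h1 h2 => simp [h1, h2, mul_add]

lemma sandwich_lTensor (x : R) (t : R ⊗[F] R) (z : R) :
    sandwich F R (LinearMap.lTensor R (LinearMap.mulRight F x) t) z
      = sandwich F R t z * x := by
  induction t using TensorProduct.induction_on with
  | zero => simp
  | tmul a b => simp [mul_assoc]
  | add t1 t2 h1 h2 => simp [h1, h2, add_mul]

include F in
lemma exists_sandwich_one [IsSimpleRing R] {a : R} (ha : a ≠ 0) :
    ∃ P : Finset (R × R), ∑ p ∈ P, p.1 * a * p.2 = 1 := by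
  set I : TwoSidedIdeal R := TwoSidedIdeal.mk'
    {x | ∃ t : R ⊗[F] R, sandwich F R t a = x}
    ⟨0, by simp⟩
    (fun {x y} ⟨t, ht⟩ ⟨t', ht'⟩ => ⟨t + t', by simp [ht, ht']⟩)
    (fun {x} ⟨t, ht⟩ => ⟨-t, by simp [ht]⟩)
    (fun {x y} ⟨t, ht⟩ =>
      ⟨LinearMap.rTensor R (LinearMap.mulLeft F x) t, by rw [sandwich_rTensor, ht]⟩)
    (fun {x y} ⟨t, ht⟩ =>
      ⟨LinearMap.lTensor R (LinearMap.mulRight F y) t, by rw [sandwich_lTensor, ht]⟩)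
    with hI
  have haI : a ∈ I := by
    rw [hI, TwoSidedIdeal.mem_mk']
    exact ⟨(1 : R) ⊗ₜ[F] (1 : R), by simp⟩
  have htop : I = ⊤ := by
    rcases IsSimpleRing.simple.eq_bot_or_eq_top I with h | h
    · rw [h] at haI
      exact absurd (by simpa using haI) ha
    · exact h
  have h1 : (1 : R) ∈ I := htop ▸ TwoSidedIdeal.mem_top _
  rw [hI, TwoSidedIdeal.mem_mk'] at h1
  obtain ⟨t, ht⟩ := h1
  obtain ⟨P, hP⟩ := TensorProduct.exists_finset t
  refine ⟨P, ?_⟩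
  rw [hP] at ht
  rw [← ht, map_sum]
  simp

lemma indep_vanish [IsSimpleRing R] [Algebra.IsCentral F R] :
    ∀ (n : ℕ) (b : Fin n → R), LinearIndependent F b → ∀ a : Fin n → R,
      (∀ z : R, ∑ j, a j * z * b j = 0) → ∀ j, a j = 0 := by
  intro n
  induction n with
  | zero => intro b _ a _ j; exact j.elim0
  | succ n ih =>
    intro b hb a h
    by_cases h0 : a 0 = 0
    · have tail : ∀ j : Fin n, a j.succ = 0 := by
        have := ih (b ∘ Fin.succ) (hb.comp Fin.succ (Fin.succ_injective n)) (a ∘ Fin.succ)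
          (fun z => by
            have hz := h z
            rw [Fin.sum_univ_succ, h0, zero_mul, zero_mul, zero_add] at hz
            simpa using hz)
        exact this
      intro j
      exact Fin.cases h0 tail j
    · exfalso
      obtain ⟨P, hP⟩ := exists_sandwich_one F R h0
      set a' : Fin (n + 1) → R := fun j => ∑ p ∈ P, p.1 * a j * p.2 with ha'
      have ha'0 : a' 0 = 1 := hP
      have h' : ∀ z : R, ∑ j, a' j * z * b j = 0 := by
        intro z
        calc ∑ j, a' j * z * b j
            = ∑ j, ∑ p ∈ P, p.1 * (a j * (p.2 * z) * b j) := by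
              refine Finset.sum_congr rfl fun j _ => ?_
              simp only [ha']
              rw [Finset.sum_mul, Finset.sum_mul]
              exact Finset.sum_congr rfl fun p _ => by noncomm_ring
          _ = ∑ p ∈ P, ∑ j, p.1 * (a j * (p.2 * z) * b j) := Finset.sum_comm
          _ = ∑ p ∈ P, p.1 * ∑ j, a j * (p.2 * z) * b j := by
              exact Finset.sum_congr rfl fun p _ => (Finset.mul_sum _ _ _).symm
          _ = 0 := by simp [h]
      have hcen : ∀ (j : Fin n) (x : R), a' j.succ * x = x * a' j.succ := by
        intro j x
        have key : ∀ z : R, ∑ j : Fin n,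
            (a' j.succ * x - x * a' j.succ) * z * (b ∘ Fin.succ) j = 0 := by
          intro z
          have e1 : ∑ j : Fin (n+1), (a' j * x - x * a' j) * z * b j = 0 := by
            have expand : ∀ j : Fin (n+1), (a' j * x - x * a' j) * z * b j
                = a' j * (x * z) * b j - x * (a' j * z * b j) := by
              intro j; noncomm_ring
            rw [Finset.sum_congr rfl fun j _ => expand j, Finset.sum_sub_distrib,
              h' (x * z), ← Finset.mul_sum, h' z, mul_zero, sub_zero]
          rw [Fin.sum_univ_succ, ha'0, one_mul, mul_one, sub_self, zero_mul, zero_mul,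
            zero_add] at e1
          simpa using e1
        exact sub_eq_zero.mp (ih (b ∘ Fin.succ) (hb.comp Fin.succ (Fin.succ_injective n))
          (fun j => a' j.succ * x - x * a' j.succ) key j)
      have hall : ∀ j : Fin (n + 1), ∃ μ : F, algebraMap F R μ = a' j := by
        refine Fin.cases ⟨1, by rw [map_one, ha'0]⟩ (fun j => ?_)
        have hc : a' j.succ ∈ Subalgebra.center F R := by
          rw [Subalgebra.mem_center_iff]
          intro x
          exact (hcen j x).symm
        have hbot : a' j.succ ∈ (⊥ : Subalgebra F R) := Algebra.IsCentral.out hc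
        rw [Algebra.mem_bot] at hbot
        obtain ⟨μ, hμ⟩ := hbot
        exact ⟨μ, hμ⟩
      choose lam hlam using hall
      have hz : ∑ j, lam j • b j = 0 := by
        have h1 := h' 1
        rw [← h1]
        refine Finset.sum_congr rfl fun j _ => ?_
        rw [Algebra.smul_def, hlam j, mul_one]
      have hlam0 : lam 0 = 0 := by
        have := Fintype.linearIndependent_iff.mp hb lam hz
        exact this 0
      have : (1 : R) = 0 := by
        rw [← ha'0, ← hlam 0, hlam0, map_zero]
      exact one_ne_zero this

variable [FiniteDimensional F R] [IsSimpleRing R] [Algebra.IsCentral F R]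

lemma sandwich_exists_rep {n : ℕ} (bR : Module.Basis (Fin n) F R) (t : R ⊗[F] R) :
    ∃ a : Fin n → R, t = ∑ j, a j ⊗ₜ[F] bR j := by
  induction t using TensorProduct.induction_on with
  | zero => exact ⟨0, by simp⟩
  | tmul x y =>
    refine ⟨fun j => bR.repr y j • x, ?_⟩
    conv_lhs => rw [← Module.Basis.sum_repr bR y]
    rw [TensorProduct.tmul_sum]
    exact Finset.sum_congr rfl fun j _ => by
      rw [TensorProduct.tmul_smul, TensorProduct.smul_tmul']
  | add t1 t2 h1 h2 =>
    obtain ⟨a1, ha1⟩ := h1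
    obtain ⟨a2, ha2⟩ := h2
    exact ⟨a1 + a2, by simp [ha1, ha2, TensorProduct.add_tmul, Finset.sum_add_distrib]⟩

lemma sandwich_injective : Function.Injective (sandwich F R) := by
  rw [← LinearMap.ker_eq_bot, LinearMap.ker_eq_bot']
  intro t ht
  obtain ⟨a, rfl⟩ := sandwich_exists_rep F R (Module.finBasis F R) t
  have hz : ∀ z : R, ∑ j, a j * z * (Module.finBasis F R) j = 0 := by
    intro z
    have h2 := LinearMap.congr_fun ht z
    simpa using h2
  have := indep_vanish F R _ (Module.finBasis F R) (Module.finBasis F R).linearIndependent a hz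
  simp [this]

lemma sandwich_surjective : Function.Surjective (sandwich F R) := by
  rw [← LinearMap.injective_iff_surjective_of_finrank_eq_finrank]
  · exact sandwich_injective F R
  · rw [Module.finrank_tensorProduct, Module.finrank_linearMap]

variable (S : Type v) [Ring S] [Algebra F S]

/-- `a ⊗ b ↦ φ a * (b ⊗ 1)` -/
noncomputable def gmap (φ : R →ₗ[F] R ⊗[F] S) : R ⊗[F] R →ₗ[F] R ⊗[F] S :=
  TensorProduct.lift <| LinearMap.mk₂ F
    (fun a b => φ a * (b ⊗ₜ[F] (1 : S)))
    (fun a a' b => by simp [add_mul])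
    (fun c a b => by simp [smul_mul_assoc])
    (fun a b b' => by simp [TensorProduct.add_tmul, mul_add])
    (fun c a b => by rw [← TensorProduct.smul_tmul', mul_smul_comm])

@[simp] lemma gmap_tmul (φ : R →ₗ[F] R ⊗[F] S) (a b : R) :
    gmap F R S φ (a ⊗ₜ[F] b) = φ a * (b ⊗ₜ[F] (1 : S)) := by
  simp [gmap]

/-- `a ⊗ b ↦ (a ⊗ 1) * φ b` -/
noncomputable def hmap (φ : R →ₗ[F] R ⊗[F] S) : R ⊗[F] R →ₗ[F] R ⊗[F] S :=
  TensorProduct.lift <| LinearMap.mk₂ F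
    (fun a b => (a ⊗ₜ[F] (1 : S)) * φ b)
    (fun a a' b => by simp [TensorProduct.add_tmul, add_mul])
    (fun c a b => by rw [← TensorProduct.smul_tmul', smul_mul_assoc])
    (fun a b b' => by simp [mul_add])
    (fun c a b => by simp [mul_smul_comm])

@[simp] lemma hmap_tmul (φ : R →ₗ[F] R ⊗[F] S) (a b : R) :
    hmap F R S φ (a ⊗ₜ[F] b) = (a ⊗ₜ[F] (1 : S)) * φ b := by
  simp [hmap]

lemma exists_emb (d : ℕ) (r : Module.Basis (Fin d) F R) :
    ∃ ι : (R ⊗[F] S) →ₐ[F] Matrix (Fin d) (Fin d) S, Function.Injective ι := by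
  classical
  let A : R →ₐ[F] Matrix (Fin d) (Fin d) F :=
    (LinearMap.toMatrixAlgEquiv r).toAlgHom.comp (Algebra.lmul F R)
  have hA : Function.Injective A := by
    intro x y hxy
    have h2 : Algebra.lmul F R x = Algebra.lmul F R y :=
      (LinearMap.toMatrixAlgEquiv r).injective hxy
    simpa using LinearMap.congr_fun h2 1
  let J : (R ⊗[F] S) →ₐ[F] (Matrix (Fin d) (Fin d) F ⊗[F] S) :=
    Algebra.TensorProduct.map A (AlgHom.id F S)
  have hJ : Function.Injective J := by
    have : ⇑J = ⇑(LinearMap.rTensor S A.toLinearMap) := rfl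
    rw [this]
    exact Module.Flat.rTensor_preserves_injective_linearMap _ hA
  let e2 : (Matrix (Fin d) (Fin d) F ⊗[F] S) ≃ₐ[F] Matrix (Fin d) (Fin d) S :=
    (Algebra.TensorProduct.comm F _ S).trans (matrixEquivTensor (Fin d) F S).symm
  exact ⟨e2.toAlgHom.comp J, by
    rw [AlgHom.coe_comp]
    exact (e2.injective).comp hJ⟩

end Aux

theorem basic_lemma (F : Type u) (R : Type u) (S : Type v)
    [Field F] [Ring R] [Algebra F R] [Ring S] [Algebra F S]
    [FiniteDimensional F R] [IsSimpleRing R] [Algebra.IsCentral F R]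
    (d : ℕ) (r : Module.Basis (Fin d) F R) (φ : R →ₗ[F] R ⊗[F] S) :
    ((φ 1 = 1 ∧ ∀ x y : R, φ (x * y) = φ x * φ y) ↔
      ∃ c : Fin d → R ⊗[F] S,
        (∀ x : R, φ x = ∑ k, c k * ((x * r k) ⊗ₜ[F] (1 : S))) ∧
        (∀ (x : R) (k : Fin d), φ x * c k = c k * (x ⊗ₜ[F] (1 : S))) ∧
        (∑ k, c k * ((r k) ⊗ₜ[F] (1 : S)) = 1)) ∧
    (∀ (c : Fin d → R ⊗[F] S) (s : Fin d → Fin d → S),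
      (∀ x : R, φ x = ∑ k, c k * ((x * r k) ⊗ₜ[F] (1 : S))) →
      (∀ (x : R) (k : Fin d), φ x * c k = c k * (x ⊗ₜ[F] (1 : S))) →
      (∑ k, c k * ((r k) ⊗ₜ[F] (1 : S)) = 1) →
      (∀ k, c k = ∑ l, (r l) ⊗ₜ[F] s k l) →
      (∀ k l : Fin d, ∃ b : R ⊗[F] S, b * c k = (1 : R) ⊗ₜ[F] s k l) ∧
      (IsStablyFinite S → ∀ k l : Fin d, IsUnit (s k l) →
        ∃ u : (R ⊗[F] S)ˣ, Units.val u = c k ∧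
          ∀ x : R, φ x = Units.val u * (x ⊗ₜ[F] (1 : S)) * Units.val u⁻¹)) := by
  classical
  have inj := sandwich_injective F R
  constructor
  · constructor
    · rintro ⟨h1, hmul⟩
      -- choose preimages of coordinate functionals
      have hT : ∀ k : Fin d, ∃ T : R ⊗[F] R,
          ∀ z : R, sandwich F R T z = r.repr z k • 1 := by
        intro k
        obtain ⟨T, hT⟩ := sandwich_surjective F R ((r.coord k).smulRight (1 : R))
        exact ⟨T, fun z => by rw [hT]; simp⟩
      choose T hT using hT
      set G := gmap F R S φ with hG
      have L1 : ∀ (x : R) (t : R ⊗[F] R),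
          φ x * G t = G (LinearMap.rTensor R (LinearMap.mulLeft F x) t) := by
        intro x t
        induction t using TensorProduct.induction_on with
        | zero => simp
        | tmul a b => simp only [hG, LinearMap.rTensor_tmul, LinearMap.mulLeft_apply, gmap_tmul]; rw [← mul_assoc, ← hmul]
        | add t1 t2 ih1 ih2 => simp [mul_add, ih1, ih2]
      have L2 : ∀ (x : R) (t : R ⊗[F] R),
          G t * (x ⊗ₜ[F] (1 : S)) = G (LinearMap.lTensor R (LinearMap.mulRight F x) t) := by
        intro x t
        induction t using TensorProduct.induction_on with
        | zero => simp
        | tmul a b => simp only [hG, LinearMap.lTensor_tmul, LinearMap.mulRight_apply, gmap_tmul]; rw [mul_assoc, Algebra.TensorProduct.tmul_mul_tmul, one_mul]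
        | add t1 t2 ih1 ih2 => simp [add_mul, ih1, ih2]
      have Gx : ∀ x : R, φ x = G (x ⊗ₜ[F] (1 : R)) := by
        intro x
        rw [hG, gmap_tmul, ← Algebra.TensorProduct.one_def, mul_one]
      refine ⟨fun k => G (T k), ?_, ?_, ?_⟩
      · intro x
        have : ∀ k : Fin d, G (T k) * ((x * r k) ⊗ₜ[F] (1 : S))
            = G (LinearMap.lTensor R (LinearMap.mulRight F (x * r k)) (T k)) :=
          fun k => L2 (x * r k) (T k)
        rw [Finset.sum_congr rfl fun k _ => this k, ← map_sum, Gx x]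
        congr 1
        apply inj
        ext z
        rw [map_sum, LinearMap.sum_apply, sandwich_tmul, mul_one]
        symm
        calc ∑ k, sandwich F R
              (LinearMap.lTensor R (LinearMap.mulRight F (x * r k)) (T k)) z
            = ∑ k, (r.repr z k • (1:R)) * (x * r k) := by
              refine Finset.sum_congr rfl fun k _ => ?_
              rw [sandwich_lTensor, hT]
          _ = x * ∑ k, r.repr z k • r k := by
              rw [Finset.mul_sum]
              refine Finset.sum_congr rfl fun k _ => ?_
              rw [smul_mul_assoc, one_mul, mul_smul_comm]
          _ = x * z := by rw [Module.Basis.sum_repr]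
      · intro x k
        rw [L1 x (T k), L2 x (T k)]
        congr 1
        apply inj
        ext z
        rw [sandwich_rTensor, sandwich_lTensor, hT, mul_smul_comm, smul_mul_assoc,
          mul_one, one_mul]
      · have : ∀ k : Fin d, G (T k) * ((r k) ⊗ₜ[F] (1 : S))
            = G (LinearMap.lTensor R (LinearMap.mulRight F (r k)) (T k)) :=
          fun k => L2 (r k) (T k)
        rw [Finset.sum_congr rfl fun k _ => this k, ← map_sum]
        have harg : (∑ k, LinearMap.lTensor R (LinearMap.mulRight F (r k)) (T k))
            = (1 : R) ⊗ₜ[F] (1 : R) := by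
          apply inj
          ext z
          rw [map_sum, LinearMap.sum_apply, sandwich_tmul, one_mul, mul_one]
          calc ∑ k, sandwich F R
                (LinearMap.lTensor R (LinearMap.mulRight F (r k)) (T k)) z
              = ∑ k, r.repr z k • r k := by
                refine Finset.sum_congr rfl fun k _ => ?_
                rw [sandwich_lTensor, hT, smul_mul_assoc, one_mul]
            _ = z := Module.Basis.sum_repr r z
        rw [harg, hG, gmap_tmul, h1, ← Algebra.TensorProduct.one_def, mul_one]
    · rintro ⟨c, ha, hb, hc⟩
      constructor
      · rw [ha 1]
        simpa using hc
      · intro x y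
        rw [ha (x * y), ha y, Finset.mul_sum]
        refine Finset.sum_congr rfl fun k _ => ?_
        have : (x * y * r k) ⊗ₜ[F] (1 : S)
            = (x ⊗ₜ[F] (1 : S)) * ((y * r k) ⊗ₜ[F] (1 : S)) := by
          rw [Algebra.TensorProduct.tmul_mul_tmul, one_mul, mul_assoc]
        rw [this, ← mul_assoc, ← hb x k, mul_assoc]
  · intro c s ha hb hc hs
    have hbc : ∀ k l : Fin d, ∃ b : R ⊗[F] S, b * c k = (1 : R) ⊗ₜ[F] s k l := by
      intro k l
      obtain ⟨T, hT⟩ := sandwich_surjective F R ((r.coord l).smulRight (1 : R))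
      have hTz : ∀ z : R, sandwich F R T z = r.repr z l • 1 := by
        intro z; rw [hT]; simp
      refine ⟨hmap F R S φ T, ?_⟩
      have key : ∀ t : R ⊗[F] R,
          hmap F R S φ t * c k = ∑ m, (sandwich F R t (r m)) ⊗ₜ[F] s k m := by
        intro t
        induction t using TensorProduct.induction_on with
        | zero => simp
        | tmul u v =>
          rw [hmap_tmul, mul_assoc, hb v k, hs k, Finset.sum_mul, Finset.mul_sum]
          refine Finset.sum_congr rfl fun m _ => ?_
          rw [Algebra.TensorProduct.tmul_mul_tmul, Algebra.TensorProduct.tmul_mul_tmul,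
            sandwich_tmul, mul_one, one_mul, ← mul_assoc]
        | add t1 t2 ih1 ih2 =>
          rw [map_add, add_mul, ih1, ih2, ← Finset.sum_add_distrib]
          refine Finset.sum_congr rfl fun m _ => ?_
          rw [map_add, LinearMap.add_apply, TensorProduct.add_tmul]
      rw [key T]
      calc ∑ m, (sandwich F R T (r m)) ⊗ₜ[F] s k m
          = ∑ m, (if m = l then ((1:R) ⊗ₜ[F] s k m) else 0) := by
            refine Finset.sum_congr rfl fun m _ => ?_
            rw [hTz, Module.Basis.repr_self, Finsupp.single_apply, ← TensorProduct.smul_tmul',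
              ite_smul, one_smul, zero_smul]
        _ = (1 : R) ⊗ₜ[F] s k l := by rw [Finset.sum_ite_eq']; simp
    refine ⟨hbc, ?_⟩
    intro hSF k l hu
    obtain ⟨b, hbck⟩ := hbc k l
    obtain ⟨w, hw⟩ := hu
    set b' : R ⊗[F] S := ((1:R) ⊗ₜ[F] ((↑w⁻¹ : S))) * b with hb'
    have hleft : b' * c k = 1 := by
      rw [hb', mul_assoc, hbck, Algebra.TensorProduct.tmul_mul_tmul, one_mul, ← hw,
        Units.inv_mul, ← Algebra.TensorProduct.one_def]
    obtain ⟨ι, hι⟩ := exists_emb F R S d r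
    have hd1 : 1 ≤ d := by
      have : Nonempty (Fin d) := r.index_nonempty
      obtain ⟨i⟩ := this
      exact i.pos
    have h1' : ι b' * ι (c k) = 1 := by rw [← map_mul, hleft, map_one]
    have h2' : ι (c k) * ι b' = 1 := hSF d hd1 _ _ h1'
    have hright : c k * b' = 1 := hι (by rw [map_mul, h2', map_one])
    refine ⟨⟨c k, b', hright, hleft⟩, rfl, ?_⟩
    intro x
    show φ x = c k * (x ⊗ₜ[F] (1 : S)) * b'
    calc φ x = φ x * (c k * b') := by rw [hright, mul_one]
      _ = (φ x * c k) * b' := by rw [mul_assoc]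
      _ = (c k * (x ⊗ₜ[F] (1 : S))) * b' := by rw [hb x k]
end

section
/- If S₁ and S₂ are Skolem–Noether F-algebras, then their direct product S₁ × S₂ is a Skolem–Noether algebra. -/
open scoped TensorProduct

universe u v w

section Aux

variable (F : Type u) (R : Type u) (S₁ S₂ : Type v)
  [Field F] [Ring R] [Algebra F R] [Ring S₁] [Algebra F S₁] [Ring S₂] [Algebra F S₂]

/-- The canonical algebra hom `R ⊗ (S₁ × S₂) → (R ⊗ S₁) × (R ⊗ S₂)`. -/
noncomputable def tensorProdHom : R ⊗[F] (S₁ × S₂) →ₐ[F] (R ⊗[F] S₁) × (R ⊗[F] S₂) :=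
  (Algebra.TensorProduct.map (AlgHom.id F R) (AlgHom.fst F S₁ S₂)).prod
    (Algebra.TensorProduct.map (AlgHom.id F R) (AlgHom.snd F S₁ S₂))

lemma tensorProdHom_eq_prodRight :
    (tensorProdHom F R S₁ S₂).toLinearMap = (TensorProduct.prodRight F F R S₁ S₂).toLinearMap := by
  apply TensorProduct.ext'
  intro r s
  rfl

lemma tensorProdHom_bijective : Function.Bijective (tensorProdHom F R S₁ S₂) := by
  have h : ⇑(tensorProdHom F R S₁ S₂) = ⇑(TensorProduct.prodRight F F R S₁ S₂) :=
    funext fun x => DFunLike.congr_fun (tensorProdHom_eq_prodRight F R S₁ S₂) x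
  rw [h]
  exact (TensorProduct.prodRight F F R S₁ S₂).bijective

/-- The algebra isomorphism `R ⊗ (S₁ × S₂) ≃ (R ⊗ S₁) × (R ⊗ S₂)`. -/
noncomputable def tensorProdEquiv : R ⊗[F] (S₁ × S₂) ≃ₐ[F] (R ⊗[F] S₁) × (R ⊗[F] S₂) :=
  AlgEquiv.ofBijective (tensorProdHom F R S₁ S₂) (tensorProdHom_bijective F R S₁ S₂)

@[simp] lemma tensorProdEquiv_tmul (r : R) (s : S₁ × S₂) :
    tensorProdEquiv F R S₁ S₂ (r ⊗ₜ[F] s) = (r ⊗ₜ[F] s.1, r ⊗ₜ[F] s.2) := rfl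

end Aux

theorem isSkolemNoether_prod (F : Type u) (S₁ : Type v) (S₂ : Type v)
    [Field F] [Ring S₁] [Algebra F S₁] [Ring S₂] [Algebra F S₂]
    (h₁ : IsSkolemNoether F S₁) (h₂ : IsSkolemNoether F S₂) :
    IsSkolemNoether F (S₁ × S₂) := by
  intro R _ _ hfd hsimple hcentral φ
  set e := tensorProdEquiv F R S₁ S₂ with he
  set φ₁ : R →ₐ[F] R ⊗[F] S₁ :=
    (AlgHom.fst F (R ⊗[F] S₁) (R ⊗[F] S₂)).comp ((e : R ⊗[F] (S₁ × S₂) →ₐ[F] _).comp φ) with hφ₁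
  set φ₂ : R →ₐ[F] R ⊗[F] S₂ :=
    (AlgHom.snd F (R ⊗[F] S₁) (R ⊗[F] S₂)).comp ((e : R ⊗[F] (S₁ × S₂) →ₐ[F] _).comp φ) with hφ₂
  obtain ⟨c₁, hc₁⟩ := h₁ R hfd hsimple hcentral φ₁
  obtain ⟨c₂, hc₂⟩ := h₂ R hfd hsimple hcentral φ₂
  refine ⟨⟨e.symm (c₁.val, c₂.val), e.symm (c₁⁻¹.val, c₂⁻¹.val), ?_, ?_⟩, ?_⟩
  · rw [← map_mul]
    have : (c₁.val, c₂.val) * (c₁⁻¹.val, c₂⁻¹.val) = 1 := by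
      simp [Prod.mul_def]
    rw [this, map_one]
  · rw [← map_mul]
    have : (c₁⁻¹.val, c₂⁻¹.val) * (c₁.val, c₂.val) = 1 := by
      simp [Prod.mul_def]
    rw [this, map_one]
  · intro x
    apply e.injective
    have h1 : e (φ x) = (φ₁ x, φ₂ x) := rfl
    simp only [Units.inv_mk]
    rw [map_mul, map_mul, AlgEquiv.apply_symm_apply, h1, hc₁ x, hc₂ x]
    have h2 : e (x ⊗ₜ[F] (1 : S₁ × S₂)) = (x ⊗ₜ[F] (1 : S₁), x ⊗ₜ[F] (1 : S₂)) := rfl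
    rw [h2]
    simp only [AlgEquiv.apply_symm_apply, Prod.mul_def]
end

section
/- An F-algebra S is a Skolem–Noether algebra if and only if the formal power series algebra S[[ξ]] in one variable over S is a Skolem–Noether algebra. -/
open scoped TensorProduct

universe u v w

section SimpleSum
variable {R : Type*} [Ring R]

lemma SN.exists_sum_one [IsSimpleRing R] {a : R} (ha : a ≠ 0) :
    ∃ (n : ℕ) (u v : Fin n → R), ∑ j, u j * a * v j = 1 := by
  classical
  have zero_mem : (0 : R) ∈ {r : R | ∃ (n : ℕ) (u v : Fin n → R), r = ∑ j, u j * a * v j} :=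
    ⟨0, ![], ![], by simp⟩
  have add_mem : ∀ {x y : R}, x ∈ {r : R | ∃ (n : ℕ) (u v : Fin n → R), r = ∑ j, u j * a * v j} →
      y ∈ {r : R | ∃ (n : ℕ) (u v : Fin n → R), r = ∑ j, u j * a * v j} →
      x + y ∈ {r : R | ∃ (n : ℕ) (u v : Fin n → R), r = ∑ j, u j * a * v j} := by
    rintro x y ⟨n, u, v, rfl⟩ ⟨m, u', v', rfl⟩
    refine ⟨n + m, Fin.addCases u u', Fin.addCases v v', ?_⟩
    rw [Fin.sum_univ_add]
    simp
  have neg_mem : ∀ {x : R}, x ∈ {r : R | ∃ (n : ℕ) (u v : Fin n → R), r = ∑ j, u j * a * v j} →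
      -x ∈ {r : R | ∃ (n : ℕ) (u v : Fin n → R), r = ∑ j, u j * a * v j} := by
    rintro x ⟨n, u, v, rfl⟩
    exact ⟨n, fun j => -u j, v, by simp [Finset.sum_neg_distrib]⟩
  have mul_mem_left : ∀ {x y : R}, y ∈ {r : R | ∃ (n : ℕ) (u v : Fin n → R), r = ∑ j, u j * a * v j} →
      x * y ∈ {r : R | ∃ (n : ℕ) (u v : Fin n → R), r = ∑ j, u j * a * v j} := by
    rintro x y ⟨n, u, v, rfl⟩
    exact ⟨n, fun j => x * u j, v, by rw [Finset.mul_sum]; simp [mul_assoc]⟩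
  have mul_mem_right : ∀ {x y : R}, x ∈ {r : R | ∃ (n : ℕ) (u v : Fin n → R), r = ∑ j, u j * a * v j} →
      x * y ∈ {r : R | ∃ (n : ℕ) (u v : Fin n → R), r = ∑ j, u j * a * v j} := by
    rintro x y ⟨n, u, v, rfl⟩
    exact ⟨n, u, fun j => v j * y, by rw [Finset.sum_mul]; simp [mul_assoc]⟩
  set I := TwoSidedIdeal.mk' _ zero_mem add_mem neg_mem mul_mem_left mul_mem_right with hI
  have haI : a ∈ I := by
    rw [hI, TwoSidedIdeal.mem_mk']
    exact ⟨1, ![1], ![1], by simp⟩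
  have : I = ⊤ := by
    rcases IsSimpleRing.simple.eq_bot_or_eq_top I with h | h
    · rw [h, TwoSidedIdeal.mem_bot] at haI
      exact absurd haI ha
    · exact h
  have h1 : (1 : R) ∈ I := this ▸ TwoSidedIdeal.mem_top R
  rw [hI, TwoSidedIdeal.mem_mk'] at h1
  obtain ⟨n, u, v, h⟩ := h1
  exact ⟨n, u, v, h.symm⟩

end SimpleSum

section AW
variable {F : Type*} [Field F] {R : Type*} [Ring R] [Algebra F R]

lemma SN.artin_whaples [IsSimpleRing R] [Algebra.IsCentral F R]
    {ι : Type*} {b : ι → R} (hb : LinearIndependent F b) (s : Finset ι) :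
    ∀ (x : ι → R), (∀ z : R, ∑ i ∈ s, x i * z * b i = 0) → ∀ i ∈ s, x i = 0 := by
  classical
  induction s using Finset.strongInduction with
  | _ s IH =>
    intro x hx
    by_contra hcon
    push_neg at hcon
    obtain ⟨i₀, hi₀s, hi₀⟩ := hcon
    obtain ⟨n, u, v, huv⟩ := SN.exists_sum_one hi₀
    set x' : ι → R := fun i => ∑ j, u j * x i * v j with hx'def
    have hx'z : ∀ z : R, ∑ i ∈ s, x' i * z * b i = 0 := by
      intro z
      have : ∑ i ∈ s, x' i * z * b i = ∑ j, ∑ i ∈ s, u j * (x i * (v j * z) * b i) := by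
        rw [Finset.sum_comm]
        refine Finset.sum_congr rfl fun i _ => ?_
        rw [hx'def]
        simp only [Finset.sum_mul, Finset.mul_sum]
        exact Finset.sum_congr rfl fun j _ => by noncomm_ring
      rw [this]
      refine Finset.sum_eq_zero fun j _ => ?_
      rw [← Finset.mul_sum, hx (v j * z), mul_zero]
    have hx'i₀ : x' i₀ = 1 := huv
    -- all x' i commute with everything
    have hcomm : ∀ (a : R), ∀ i ∈ s, a * x' i - x' i * a = 0 := by
      intro a
      have hz : ∀ z : R, ∑ i ∈ s.erase i₀, (a * x' i - x' i * a) * z * b i = 0 := by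
        intro z
        have hfull : ∑ i ∈ s, (a * x' i - x' i * a) * z * b i = 0 := by
          have : ∑ i ∈ s, (a * x' i - x' i * a) * z * b i
              = a * (∑ i ∈ s, x' i * z * b i) - ∑ i ∈ s, x' i * (a * z) * b i := by
            rw [Finset.mul_sum, ← Finset.sum_sub_distrib]
            exact Finset.sum_congr rfl fun i _ => by noncomm_ring
          rw [this, hx'z, hx'z, mul_zero, sub_zero]
        rw [← hfull]
        rw [Finset.sum_erase_eq_sub hi₀s] at *
        · rw [hx'i₀]
          simp
      have := IH (s.erase i₀) (Finset.erase_ssubset hi₀s) _ hz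
      intro i his
      by_cases h : i = i₀
      · subst h; rw [hx'i₀]; simp
      · exact this i (Finset.mem_erase.2 ⟨h, his⟩)
    -- so x' i is central
    have hcentral : ∀ i ∈ s, ∃ c : F, algebraMap F R c = x' i := by
      intro i his
      have : x' i ∈ Subalgebra.center F R := by
        rw [Subalgebra.mem_center_iff]
        intro a
        exact sub_eq_zero.mp (hcomm a i his)
      have hle : Subalgebra.center F R ≤ ⊥ := Algebra.IsCentral.out
      have := hle this
      rw [Algebra.mem_bot] at this
      obtain ⟨c, hc⟩ := this
      exact ⟨c, hc⟩
    choose! g hg using hcentral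
    have hsum : ∑ i ∈ s, g i • b i = 0 := by
      have h1 := hx'z 1
      have : ∑ i ∈ s, x' i * 1 * b i = ∑ i ∈ s, g i • b i := by
        refine Finset.sum_congr rfl fun i his => ?_
        rw [mul_one, ← hg i his, Algebra.smul_def]
      rw [← this, h1]
    have hzero := linearIndependent_iff'.1 hb s g hsum i₀ hi₀s
    have : (1 : R) = 0 := by
      rw [← hx'i₀, ← hg i₀ hi₀s, hzero, map_zero]
    exact one_ne_zero this
end AW

section Theta
variable (F : Type*) [Field F] (R : Type*) [Ring R] [Algebra F R]

noncomputable def SN.theta : R ⊗[F] R →ₗ[F] (R →ₗ[F] R) :=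
  TensorProduct.lift (LinearMap.mk₂ F
    (fun x y => LinearMap.mulRight F y ∘ₗ LinearMap.mulLeft F x)
    (fun x x' y => by ext z; simp [add_mul])
    (fun c x y => by ext z; simp [smul_mul_assoc, mul_assoc])
    (fun x y y' => by ext z; simp [mul_add])
    (fun c x y => by ext z; simp [mul_smul_comm, smul_mul_assoc, mul_assoc]))

variable {F R}

@[simp] lemma SN.theta_tmul (x y z : R) : SN.theta F R (x ⊗ₜ[F] y) z = x * z * y := by
  simp [SN.theta, mul_assoc]

-- representation with basis on the right
lemma SN.rep_right {ι : Type*} [Fintype ι] (b : Module.Basis ι F R) (u : R ⊗[F] R) :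
    ∃ x : ι → R, u = ∑ i, x i ⊗ₜ[F] b i := by
  induction u with
  | zero => exact ⟨0, by simp⟩
  | tmul r s =>
    refine ⟨fun i => b.repr s i • r, ?_⟩
    calc r ⊗ₜ[F] s = r ⊗ₜ[F] (∑ i, b.repr s i • b i) := by rw [b.sum_repr]
      _ = ∑ i, (b.repr s i • r) ⊗ₜ[F] b i := by
          rw [TensorProduct.tmul_sum]
          exact Finset.sum_congr rfl fun i _ => (TensorProduct.smul_tmul _ _ _).symm
  | add u v hu hv =>
    obtain ⟨x, rfl⟩ := hu; obtain ⟨y, rfl⟩ := hv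
    exact ⟨x + y, by rw [← Finset.sum_add_distrib]; simp [TensorProduct.add_tmul]⟩

lemma SN.theta_injective [FiniteDimensional F R] [IsSimpleRing R] [Algebra.IsCentral F R] :
    Function.Injective (SN.theta F R) := by
  rw [injective_iff_map_eq_zero]
  intro u hu
  obtain ⟨x, rfl⟩ := SN.rep_right (Module.finBasis F R) u
  have hx : ∀ z : R, ∑ i, x i * z * (Module.finBasis F R) i = 0 := by
    intro z
    have := congrArg (fun f => f z) hu
    simpa using this
  have := SN.artin_whaples (Module.finBasis F R).linearIndependent Finset.univ x hx
  refine Finset.sum_eq_zero fun i _ => ?_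
  rw [this i (Finset.mem_univ i), TensorProduct.zero_tmul]

lemma SN.theta_surjective [FiniteDimensional F R] [IsSimpleRing R] [Algebra.IsCentral F R] :
    Function.Surjective (SN.theta F R) := by
  rw [← LinearMap.injective_iff_surjective_of_finrank_eq_finrank ?_]
  · exact SN.theta_injective
  · rw [Module.finrank_tensorProduct, Module.finrank_linearMap]

end Theta

section Sep
variable {F : Type*} [Field F] {R : Type*} [Ring R] [Algebra F R]

lemma SN.theta_lmul (a : R) (u : R ⊗[F] R) :
    SN.theta F R ((a ⊗ₜ[F] (1 : R)) * u) = LinearMap.mulLeft F a ∘ₗ SN.theta F R u := by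
  induction u with
  | zero => simp
  | tmul x y =>
    rw [Algebra.TensorProduct.tmul_mul_tmul]
    ext z
    simp [mul_assoc]
  | add u v hu hv =>
    rw [mul_add, map_add, map_add, hu, hv]
    ext z; simp [mul_add]

lemma SN.theta_rmul (a : R) (u : R ⊗[F] R) :
    SN.theta F R (u * ((1 : R) ⊗ₜ[F] a)) = LinearMap.mulRight F a ∘ₗ SN.theta F R u := by
  induction u with
  | zero => simp
  | tmul x y =>
    rw [Algebra.TensorProduct.tmul_mul_tmul]
    ext z
    simp [mul_assoc]
  | add u v hu hv =>
    rw [add_mul, map_add, map_add, hu, hv]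
    ext z; simp [add_mul]

lemma SN.exists_sep [FiniteDimensional F R] [IsSimpleRing R] [Algebra.IsCentral F R] :
    ∃ e : R ⊗[F] R, LinearMap.mul' F R e = 1 ∧
      ∀ a : R, (a ⊗ₜ[F] (1 : R)) * e = e * ((1 : R) ⊗ₜ[F] a) := by
  -- a linear functional with t 1 = 1
  obtain ⟨g, hg⟩ := (Algebra.linearMap F R).exists_leftInverse_of_injective
    (LinearMap.ker_eq_bot.mpr (algebraMap F R).injective)
  have hg1 : g (1 : R) = 1 := by
    have := congrArg (fun f => f (1 : F)) hg
    simpa using this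
  set T : R →ₗ[F] R := (LinearMap.toSpanSingleton F R 1) ∘ₗ g with hT
  obtain ⟨e, he⟩ := SN.theta_surjective (F := F) (R := R) T
  have hmul : ∀ u : R ⊗[F] R, LinearMap.mul' F R u = SN.theta F R u 1 := by
    intro u
    induction u with
    | zero => simp
    | tmul x y => simp
    | add u v hu hv => simp [hu, hv]
  refine ⟨e, ?_, ?_⟩
  · rw [hmul, he, hT]
    simp [LinearMap.toSpanSingleton, hg1]
  · intro a
    apply SN.theta_injective (F := F) (R := R)
    rw [SN.theta_lmul, SN.theta_rmul, he]
    ext z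
    simp [hT, LinearMap.toSpanSingleton, mul_smul_comm, smul_mul_assoc]

end Sep

section Bmap
variable {F : Type*} [Field F] {R : Type*} [Ring R] [Algebra F R]
variable {A : Type*} [Ring A] [Algebra F A]

noncomputable def SN.bmap (φ ψ : R →ₐ[F] A) : R ⊗[F] R →ₗ[F] A :=
  TensorProduct.lift (LinearMap.mk₂ F
    (fun x y => φ x * ψ y)
    (fun x x' y => by simp [add_mul])
    (fun c x y => by simp [smul_mul_assoc])
    (fun x y y' => by simp [mul_add])
    (fun c x y => by simp [mul_smul_comm]))

@[simp] lemma SN.bmap_tmul (φ ψ : R →ₐ[F] A) (x y : R) :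
    SN.bmap φ ψ (x ⊗ₜ[F] y) = φ x * ψ y := rfl

lemma SN.bmap_lmul (φ ψ : R →ₐ[F] A) (a : R) (u : R ⊗[F] R) :
    SN.bmap φ ψ ((a ⊗ₜ[F] (1 : R)) * u) = φ a * SN.bmap φ ψ u := by
  induction u with
  | zero => simp
  | tmul x y => rw [Algebra.TensorProduct.tmul_mul_tmul]; simp [mul_assoc]
  | add u v hu hv => rw [mul_add, map_add, hu, hv, map_add, mul_add]

lemma SN.bmap_rmul (φ ψ : R →ₐ[F] A) (a : R) (u : R ⊗[F] R) :
    SN.bmap φ ψ (u * ((1 : R) ⊗ₜ[F] a)) = SN.bmap φ ψ u * ψ a := by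
  induction u with
  | zero => simp
  | tmul x y => rw [Algebra.TensorProduct.tmul_mul_tmul]; simp [mul_assoc]
  | add u v hu hv => rw [add_mul, map_add, hu, hv, map_add, add_mul]

lemma SN.bmap_eq_of_eq (χ : R →ₐ[F] A) (u : R ⊗[F] R) :
    SN.bmap χ χ u = χ (LinearMap.mul' F R u) := by
  induction u with
  | zero => simp
  | tmul x y => simp
  | add u v hu hv => simp [hu, hv]

lemma SN.map_bmap {A₀ : Type*} [Ring A₀] [Algebra F A₀] (π : A →ₐ[F] A₀)
    (φ ψ : R →ₐ[F] A) (u : R ⊗[F] R) :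
    π (SN.bmap φ ψ u) = SN.bmap (π.comp φ) (π.comp ψ) u := by
  induction u with
  | zero => simp
  | tmul x y => simp
  | add u v hu hv => simp [hu, hv]

end Bmap

section PS
variable (F : Type*) [Field F] (B : Type*) [Ring B] [Algebra F B]

noncomputable def SN.CAlg : B →ₐ[F] PowerSeries B :=
  { PowerSeries.C (R := B) with
    commutes' := fun r => by simp [PowerSeries.algebraMap_apply] }

@[simp] lemma SN.CAlg_apply (b : B) : SN.CAlg F B b = PowerSeries.C (R := B) b := rfl

noncomputable def SN.ccAlg : PowerSeries B →ₐ[F] B :=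
  { PowerSeries.constantCoeff (R := B) with
    commutes' := fun r => by simp [PowerSeries.algebraMap_apply] }

@[simp] lemma SN.ccAlg_apply (f : PowerSeries B) :
    SN.ccAlg F B f = PowerSeries.constantCoeff (R := B) f := rfl

variable {F B}

lemma SN.isUnit_of_constantCoeff (f : PowerSeries B)
    (h : IsUnit (PowerSeries.constantCoeff (R := B) f)) : IsUnit f := by
  obtain ⟨u, hu⟩ := h
  set g := f.invOfUnit u with hgdef
  have hfg : f * g = 1 := PowerSeries.mul_invOfUnit f u hu.symm
  have hgc : PowerSeries.constantCoeff (R := B) g = ↑u⁻¹ := PowerSeries.constantCoeff_invOfUnit f u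
  set k := g.invOfUnit u⁻¹ with hkdef
  have hgk : g * k = 1 := PowerSeries.mul_invOfUnit g u⁻¹ hgc
  have hkf : k = f := by
    calc k = 1 * k := (one_mul k).symm
      _ = (f * g) * k := by rw [hfg]
      _ = f * (g * k) := by rw [mul_assoc]
      _ = f := by rw [hgk, mul_one]
  exact ⟨⟨f, g, hfg, by rw [← hkf] at hfg ⊢; rw [hgk]⟩, rfl⟩

end PS

section MapAlg
variable {F : Type*} [Field F] {B B' : Type*} [Ring B] [Algebra F B] [Ring B'] [Algebra F B']

noncomputable def SN.psMapAlg (f : B →ₐ[F] B') : PowerSeries B →ₐ[F] PowerSeries B' :=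
  { PowerSeries.map f.toRingHom with
    commutes' := fun r => by
      simp [PowerSeries.algebraMap_apply, PowerSeries.map_C] }

@[simp] lemma SN.coeff_psMapAlg (f : B →ₐ[F] B') (n : ℕ) (g : PowerSeries B) :
    PowerSeries.coeff (R := B') n (SN.psMapAlg f g) = f (PowerSeries.coeff (R := B) n g) :=
  PowerSeries.coeff_map f.toRingHom n g

lemma SN.commute_C (a : B) (f : PowerSeries B)
    (h : ∀ n, Commute a (PowerSeries.coeff (R := B) n f)) :
    Commute (PowerSeries.C (R := B) a) f := by
  apply PowerSeries.ext
  intro n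
  rw [PowerSeries.coeff_C_mul, PowerSeries.coeff_mul_C]
  exact h n

end MapAlg

section Phi
variable (F : Type*) [Field F] (R : Type*) [Ring R] [Algebra F R]
variable (S : Type*) [Ring S] [Algebra F S]

noncomputable def SN.phiHom : R ⊗[F] PowerSeries S →ₐ[F] PowerSeries (R ⊗[F] S) :=
  Algebra.TensorProduct.lift
    ((SN.CAlg F (R ⊗[F] S)).comp Algebra.TensorProduct.includeLeft)
    (SN.psMapAlg (Algebra.TensorProduct.includeRight (R := F) (A := R) (B := S)))
    (fun x g => by
      apply SN.commute_C
      intro n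
      simp only [SN.coeff_psMapAlg, Algebra.TensorProduct.includeRight_apply]
      show _ = _
      simp [Algebra.TensorProduct.includeLeft_apply, Algebra.TensorProduct.tmul_mul_tmul])

variable {F R S}

@[simp] lemma SN.phiHom_tmul (x : R) (g : PowerSeries S) :
    SN.phiHom F R S (x ⊗ₜ[F] g) =
      PowerSeries.C (R := (R ⊗[F] S)) (x ⊗ₜ[F] (1 : S)) * SN.psMapAlg
        (Algebra.TensorProduct.includeRight (R := F) (A := R) (B := S)) g :=
  Algebra.TensorProduct.lift_tmul _ _ _ _ _

lemma SN.coeff_phiHom_tmul (x : R) (g : PowerSeries S) (n : ℕ) :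
    PowerSeries.coeff (R := (R ⊗[F] S)) n (SN.phiHom F R S (x ⊗ₜ[F] g)) =
      x ⊗ₜ[F] (PowerSeries.coeff (R := S) n g) := by
  rw [SN.phiHom_tmul, PowerSeries.coeff_C_mul, SN.coeff_psMapAlg,
    Algebra.TensorProduct.includeRight_apply, Algebra.TensorProduct.tmul_mul_tmul,
    mul_one, one_mul]

@[simp] lemma SN.phiHom_tmul_one (x : R) :
    SN.phiHom F R S (x ⊗ₜ[F] (1 : PowerSeries S)) =
      PowerSeries.C (R := (R ⊗[F] S)) (x ⊗ₜ[F] (1 : S)) := by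
  rw [SN.phiHom_tmul, map_one, mul_one]

end Phi

section Proj
variable {F : Type*} [Field F] {R : Type*} [Ring R] [Algebra F R]
variable {M : Type*} [AddCommMonoid M] [Module F M]

noncomputable def SN.proj {ι : Type*} (b : Module.Basis ι F R) (i : ι) : R ⊗[F] M →ₗ[F] M :=
  (TensorProduct.lid F M).toLinearMap ∘ₗ TensorProduct.map (b.coord i) LinearMap.id

@[simp] lemma SN.proj_tmul {ι : Type*} (b : Module.Basis ι F R) (i : ι) (r : R) (m : M) :
    SN.proj b i (r ⊗ₜ[F] m) = b.repr r i • m := by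
  simp [SN.proj, Module.Basis.coord]

lemma SN.sum_proj {ι : Type*} [Fintype ι] (b : Module.Basis ι F R) (u : R ⊗[F] M) :
    ∑ i, b i ⊗ₜ[F] SN.proj b i u = u := by
  classical
  induction u with
  | zero => simp
  | tmul r m =>
    simp only [SN.proj_tmul]
    calc ∑ i, b i ⊗ₜ[F] (b.repr r i • m) = ∑ i, (b.repr r i • b i) ⊗ₜ[F] m :=
          Finset.sum_congr rfl fun i _ => (TensorProduct.smul_tmul _ _ _).symm
      _ = r ⊗ₜ[F] m := by rw [← TensorProduct.sum_tmul, b.sum_repr]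
  | add u v hu hv =>
    simp only [map_add, TensorProduct.tmul_add, Finset.sum_add_distrib, hu, hv]

lemma SN.eq_zero_of_sum_tmul {ι : Type*} [Fintype ι] [DecidableEq ι] (b : Module.Basis ι F R)
    (m : ι → M) (h : ∑ i, b i ⊗ₜ[F] m i = 0) : ∀ j, m j = 0 := by
  intro j
  have := congrArg (SN.proj b j) h
  rw [map_sum, map_zero] at this
  rw [← this]
  rw [Finset.sum_eq_single j]
  · simp
  · intro i _ hij
    simp [Module.Basis.repr_self, Finsupp.single_apply, hij]
  · intro h; exact absurd (Finset.mem_univ j) h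

end Proj

section PhiEquiv
variable {F : Type*} [Field F] {R : Type*} [Ring R] [Algebra F R]
variable {S : Type*} [Ring S] [Algebra F S]

lemma SN.phiHom_bijective [FiniteDimensional F R] :
    Function.Bijective (SN.phiHom F R S) := by
  classical
  set b := Module.finBasis F R with hb
  constructor
  · rw [injective_iff_map_eq_zero]
    intro u hu
    rw [← SN.sum_proj b u] at hu ⊢
    set g : Fin (Module.finrank F R) → PowerSeries S := fun i => SN.proj b i u with hg
    have hco : ∀ n : ℕ, ∀ j, PowerSeries.coeff (R := S) n (g j) = 0 := by
      intro n j
      have h1 : PowerSeries.coeff (R := (R ⊗[F] S)) n (SN.phiHom F R S (∑ i, b i ⊗ₜ[F] g i)) = 0 := by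
        rw [hu, map_zero]
      rw [map_sum, map_sum] at h1
      simp only [SN.coeff_phiHom_tmul] at h1
      exact SN.eq_zero_of_sum_tmul b _ h1 j
    have hgz : ∀ j, g j = 0 := fun j => PowerSeries.ext fun n => by rw [hco n j, map_zero]
    refine Finset.sum_eq_zero fun i _ => ?_
    show b i ⊗ₜ[F] g i = 0
    rw [hgz i, TensorProduct.tmul_zero]
  · intro f
    refine ⟨∑ i, b i ⊗ₜ[F] (PowerSeries.mk fun n => SN.proj b i (PowerSeries.coeff (R := _) n f)), ?_⟩
    apply PowerSeries.ext
    intro n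
    rw [map_sum, map_sum]
    simp only [SN.coeff_phiHom_tmul, PowerSeries.coeff_mk]
    exact SN.sum_proj b _

noncomputable def SN.phi [FiniteDimensional F R] :
    (R ⊗[F] PowerSeries S) ≃ₐ[F] PowerSeries (R ⊗[F] S) :=
  AlgEquiv.ofBijective (SN.phiHom F R S) SN.phiHom_bijective

@[simp] lemma SN.phi_tmul_one [FiniteDimensional F R] (x : R) :
    SN.phi (F := F) (R := R) (S := S) (x ⊗ₜ[F] (1 : PowerSeries S)) =
      PowerSeries.C (R := (R ⊗[F] S)) (x ⊗ₜ[F] (1 : S)) := SN.phiHom_tmul_one x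

lemma SN.phi_symm_C [FiniteDimensional F R] (x : R) :
    (SN.phi (F := F) (R := R) (S := S)).symm (PowerSeries.C (R := (R ⊗[F] S)) (x ⊗ₜ[F] (1 : S))) =
      x ⊗ₜ[F] (1 : PowerSeries S) := by
  rw [← SN.phi_tmul_one, AlgEquiv.symm_apply_apply]

end PhiEquiv

section Conj
variable {F : Type*} [Field F] {A : Type*} [Ring A] [Algebra F A]

noncomputable def SN.conjHom (u : Aˣ) : A →ₐ[F] A where
  toFun a := ↑u * a * ↑u⁻¹
  map_one' := by simp
  map_mul' x y := by
    simp only [mul_assoc]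
    rw [Units.inv_mul_cancel_left]
  map_zero' := by simp
  map_add' x y := by simp [mul_add, add_mul]
  commutes' r := by
    show ↑u * algebraMap F A r * ↑u⁻¹ = algebraMap F A r
    rw [← Algebra.commutes r (↑u : A), mul_assoc, Units.mul_inv, mul_one]

@[simp] lemma SN.conjHom_apply (u : Aˣ) (a : A) : SN.conjHom (F := F) u a = ↑u * a * ↑u⁻¹ := rfl

end Conj


set_option maxHeartbeats 1000000 in
theorem isSkolemNoether_iff_powerSeries (F : Type u) (S : Type v)
    [Field F] [Ring S] [Algebra F S] :
    IsSkolemNoether F S ↔ IsSkolemNoether F (PowerSeries S) := by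
  constructor
  · -- forward direction
    intro hS R _ _ hfd hsimp hcent φ
    haveI := hfd; haveI := hsimp; haveI := hcent
    classical
    obtain ⟨e, he1, he2⟩ := SN.exists_sep (F := F) (R := R)
    set Φ : (R ⊗[F] PowerSeries S) ≃ₐ[F] PowerSeries (R ⊗[F] S) :=
      SN.phi (F := F) (R := R) (S := S) with hΦ
    set φ' : R →ₐ[F] PowerSeries (R ⊗[F] S) := (Φ : R ⊗[F] PowerSeries S →ₐ[F] _).comp φ with hφ'
    set ε : PowerSeries (R ⊗[F] S) →ₐ[F] R ⊗[F] S := SN.ccAlg F (R ⊗[F] S) with hε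
    obtain ⟨c₀, hc₀⟩ := hS R hfd hsimp hcent (ε.comp φ')
    set CA : R ⊗[F] S →ₐ[F] PowerSeries (R ⊗[F] S) := SN.CAlg F (R ⊗[F] S) with hCA
    set C₀ : (PowerSeries (R ⊗[F] S))ˣ := Units.map CA.toRingHom.toMonoidHom c₀ with hC₀
    have hC₀val : (↑C₀ : PowerSeries (R ⊗[F] S)) = CA ↑c₀ := rfl
    have hC₀inv : (↑C₀⁻¹ : PowerSeries (R ⊗[F] S)) = CA ↑c₀⁻¹ := by
      rw [hC₀, ← map_inv (Units.map CA.toRingHom.toMonoidHom) c₀]; rfl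
    set ψ : R →ₐ[F] PowerSeries (R ⊗[F] S) := (SN.conjHom (F := F) C₀⁻¹).comp φ' with hψ
    set ι : R →ₐ[F] PowerSeries (R ⊗[F] S) := CA.comp Algebra.TensorProduct.includeLeft with hι
    have hεCA : ∀ t : R ⊗[F] S, ε (CA t) = t := fun t => PowerSeries.constantCoeff_C t
    have hιx : ∀ x : R, ι x = PowerSeries.C (R := (R ⊗[F] S)) (x ⊗ₜ[F] (1 : S)) := fun x => rfl
    have hψx : ∀ x : R, ψ x = ↑C₀⁻¹ * φ' x * ↑C₀ := by
      intro x
      rw [hψ]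
      simp only [AlgHom.coe_comp, Function.comp_apply, SN.conjHom_apply, inv_inv]
    have hεψ : ∀ x : R, ε (ψ x) = x ⊗ₜ[F] (1 : S) := by
      intro x
      rw [hψx, map_mul, map_mul, hC₀inv, hC₀val, hεCA, hεCA]
      have : ε (φ' x) = ↑c₀ * (x ⊗ₜ[F] (1 : S)) * ↑c₀⁻¹ := hc₀ x
      rw [this]
      simp only [← mul_assoc]
      rw [Units.inv_mul, one_mul, mul_assoc, Units.inv_mul, mul_one]
    have hει : ∀ x : R, ε (ι x) = x ⊗ₜ[F] (1 : S) := fun x => by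
      rw [hιx]; exact PowerSeries.constantCoeff_C _
    set c := SN.bmap ψ ι e with hc
    have hεc : ε c = 1 := by
      rw [hc, SN.map_bmap]
      have : ε.comp ψ = ε.comp ι := by
        apply AlgHom.ext; intro x
        simp only [AlgHom.coe_comp, Function.comp_apply]
        rw [hεψ, hει]
      rw [this, SN.bmap_eq_of_eq, he1, map_one]
    have hcu : IsUnit c := by
      apply SN.isUnit_of_constantCoeff
      have : PowerSeries.constantCoeff (R := (R ⊗[F] S)) c = ε c := rfl
      rw [this, hεc]
      exact isUnit_one
    obtain ⟨uc, huc⟩ := hcu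
    have hint : ∀ x : R, ψ x * c = c * ι x := by
      intro x
      rw [hc, ← SN.bmap_lmul, ← SN.bmap_rmul, he2]
    set u' : (PowerSeries (R ⊗[F] S))ˣ := C₀ * uc with hu'
    have hφ'x : ∀ x : R, φ' x = ↑u' * ι x * ↑u'⁻¹ := by
      intro x
      have h1 : ψ x = ↑uc * ι x * ↑uc⁻¹ := by
        have := hint x
        rw [← huc] at this
        calc ψ x = ψ x * ↑uc * ↑uc⁻¹ := by rw [Units.mul_inv_cancel_right]
          _ = ↑uc * ι x * ↑uc⁻¹ := by rw [this]
      have h2 : φ' x = ↑C₀ * ψ x * ↑C₀⁻¹ := by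
        rw [hψx]
        calc φ' x = ↑C₀ * ↑C₀⁻¹ * φ' x * (↑C₀ * ↑C₀⁻¹) := by
              rw [Units.mul_inv, one_mul, mul_one]
          _ = ↑C₀ * (↑C₀⁻¹ * φ' x * ↑C₀) * ↑C₀⁻¹ := by simp only [mul_assoc]
      rw [h2, h1, hu']
      simp only [Units.val_mul, mul_inv_rev, Units.val_mul, mul_assoc]
    refine ⟨Units.map Φ.symm.toAlgHom.toRingHom.toMonoidHom u', fun x => ?_⟩
    have hφx : φ x = Φ.symm (φ' x) := by
      rw [hφ']
      simp only [AlgHom.coe_comp, Function.comp_apply, AlgEquiv.coe_algHom]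
      exact (Φ.symm_apply_apply (φ x)).symm
    rw [hφx, hφ'x x, map_mul, map_mul]
    have hmapinv : (↑(Units.map Φ.symm.toAlgHom.toRingHom.toMonoidHom u')⁻¹ :
        R ⊗[F] PowerSeries S) = Φ.symm ↑u'⁻¹ := by
      rw [← map_inv (Units.map Φ.symm.toAlgHom.toRingHom.toMonoidHom) u', Units.coe_map]
      simp
    have hmapval : (↑(Units.map Φ.symm.toAlgHom.toRingHom.toMonoidHom u') :
        R ⊗[F] PowerSeries S) = Φ.symm ↑u' := by
      rw [Units.coe_map]; simp
    rw [hmapinv, hmapval]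
    have : Φ.symm (ι x) = x ⊗ₜ[F] (1 : PowerSeries S) := by
      rw [hιx]; exact SN.phi_symm_C x
    rw [this]
  · -- backward direction
    intro h R _ _ hfd hsimp hcent φ
    haveI := hfd; haveI := hsimp; haveI := hcent
    set j : R ⊗[F] S →ₐ[F] R ⊗[F] PowerSeries S :=
      Algebra.TensorProduct.map (AlgHom.id F R) (SN.CAlg F S) with hj
    set p : R ⊗[F] PowerSeries S →ₐ[F] R ⊗[F] S :=
      Algebra.TensorProduct.map (AlgHom.id F R) (SN.ccAlg F S) with hp
    have hpj : ∀ y : R ⊗[F] S, p (j y) = y := by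
      intro y
      induction y with
      | zero => simp
      | tmul r s =>
        rw [hj, hp, Algebra.TensorProduct.map_tmul, Algebra.TensorProduct.map_tmul]
        simp
      | add a b ha hb => rw [map_add, map_add, ha, hb]
    obtain ⟨c, hc⟩ := h R hfd hsimp hcent (j.comp φ)
    refine ⟨Units.map p.toRingHom.toMonoidHom c, fun x => ?_⟩
    have := congrArg p (hc x)
    rw [AlgHom.coe_comp, Function.comp_apply, hpj] at this
    rw [this, map_mul, map_mul]
    have h1 : p (x ⊗ₜ[F] (1 : PowerSeries S)) = x ⊗ₜ[F] (1 : S) := by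
      rw [hp, Algebra.TensorProduct.map_tmul, map_one]; rfl
    have h2 : (↑(Units.map p.toRingHom.toMonoidHom c)⁻¹ : R ⊗[F] S) = p ↑c⁻¹ := by
      rw [← map_inv (Units.map p.toRingHom.toMonoidHom) c, Units.coe_map]
      simp
    have h3 : (↑(Units.map p.toRingHom.toMonoidHom c) : R ⊗[F] S) = p ↑c := by
      rw [Units.coe_map]; simp
    rw [h1, h2, h3]
end
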